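/- arXiv:2301.08988 — 8 statements merged into one kernel-verified Lean document; each statement's English description precedes it below -/
import Mathlib

section
/- For all integers d ≥ 1 and k ≥ 2, the product ∏_{i=1}^{d-1} (kd - k - i + 1)/(kd - i) equals ∏_{i=1}^{min(k-1,d-1)} ((k-1)d - k + i + 1)/(kd - i). -/
open Finset

/-- Telescoping identity:
`∏_{i=1}^{d-1} (kd-k-i+1)/(kd-i) = ∏_{i=1}^{min(k-1,d-1)} ((k-1)d-k+i+1)/(kd-i)`. -/
theorem stmt0 (d k : ℕ) (hd : 1 ≤ d) (hk : 2 ≤ k) :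
    ∏ i ∈ Finset.Icc 1 (d - 1),
        (((k : ℚ) * d - k - i + 1) / ((k : ℚ) * d - i)) =
    ∏ i ∈ Finset.Icc 1 (min (k - 1) (d - 1)),
        ((((k : ℚ) - 1) * d - k + i + 1) / ((k : ℚ) * d - i)) := by
  have hicc : ∀ n : ℕ, Finset.Icc 1 n = Finset.Ioc 0 n := fun n => Finset.Icc_add_one_left_eq_Ioc 0 n
  have hden : ∀ i : ℕ, i ≤ d - 1 → ((k : ℚ) * d - i) ≠ 0 := by
    intro i hi
    have h1 : i < k * d := by
      calc i < d := by omega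
        _ ≤ k * d := Nat.le_mul_of_pos_left d (by omega)
    have h2 : (i : ℚ) < (k : ℚ) * d := by exact_mod_cast h1
    linarith
  rcases le_or_gt d k with hdk | hkd
  · rw [min_eq_right (by omega), hicc]
    rw [Finset.prod_div_distrib, Finset.prod_div_distrib]
    congr 1
    apply Finset.prod_nbij' (fun a => d - a) (fun a => d - a)
    · intro a ha; simp only [Finset.mem_Ioc] at ha ⊢; omega
    · intro a ha; simp only [Finset.mem_Ioc] at ha ⊢; omega
    · intro a ha; simp only [Finset.mem_Ioc] at ha; omega
    · intro a ha; simp only [Finset.mem_Ioc] at ha; omega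
    · intro a ha
      simp only [Finset.mem_Ioc] at ha
      have hc : ((d - a : ℕ) : ℚ) = (d : ℚ) - a := by
        have : a ≤ d := by omega
        push_cast [Nat.cast_sub this]; ring
      rw [hc]; ring
  · rw [min_eq_left (by omega), hicc, hicc]
    rw [Finset.prod_div_distrib, Finset.prod_div_distrib]
    set f : ℕ → ℚ := fun i => (k : ℚ) * d - k - i + 1 with hf
    set g : ℕ → ℚ := fun i => ((k : ℚ) - 1) * d - k + i + 1 with hg
    set den : ℕ → ℚ := fun i => (k : ℚ) * d - i with hden'
    have hsplitN : ∏ i ∈ Ioc 0 (d-1), f i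
        = (∏ i ∈ Ioc 0 (d-k), f i) * ∏ i ∈ Ioc (d-k) (d-1), f i :=
      (Finset.prod_Ioc_consecutive f (by omega) (by omega)).symm
    have hsplitD : ∏ i ∈ Ioc 0 (d-1), den i
        = (∏ i ∈ Ioc 0 (k-1), den i) * ∏ i ∈ Ioc (k-1) (d-1), den i :=
      (Finset.prod_Ioc_consecutive den (by omega) (by omega)).symm
    have hA : ∏ i ∈ Ioc 0 (d-k), f i = ∏ i ∈ Ioc (k-1) (d-1), den i := by
      apply Finset.prod_nbij' (fun a => a + (k - 1)) (fun a => a - (k - 1))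
      · intro a ha; simp only [Finset.mem_Ioc] at ha ⊢; omega
      · intro a ha; simp only [Finset.mem_Ioc] at ha ⊢; omega
      · intro a ha; simp only [Finset.mem_Ioc] at ha; omega
      · intro a ha; simp only [Finset.mem_Ioc] at ha; omega
      · intro a ha
        simp only [Finset.mem_Ioc] at ha
        simp only [hf, hden']
        have : ((a + (k - 1) : ℕ) : ℚ) = (a : ℚ) + (k : ℚ) - 1 := by
          push_cast [Nat.cast_sub (show 1 ≤ k by omega)]; ring
        rw [this]; ring
    have hB : ∏ i ∈ Ioc (d-k) (d-1), f i = ∏ i ∈ Ioc 0 (k-1), g i := by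
      apply Finset.prod_nbij' (fun a => d - a) (fun a => d - a)
      · intro a ha; simp only [Finset.mem_Ioc] at ha ⊢; omega
      · intro a ha; simp only [Finset.mem_Ioc] at ha ⊢; omega
      · intro a ha; simp only [Finset.mem_Ioc] at ha; omega
      · intro a ha; simp only [Finset.mem_Ioc] at ha; omega
      · intro a ha
        simp only [Finset.mem_Ioc] at ha
        simp only [hf, hg]
        have : ((d - a : ℕ) : ℚ) = (d : ℚ) - a := by
          push_cast [Nat.cast_sub (show a ≤ d by omega)]; ring
        rw [this]; ring
    have hE : (∏ i ∈ Ioc (k-1) (d-1), den i) ≠ 0 := by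
      rw [Finset.prod_ne_zero_iff]
      intro a ha
      simp only [Finset.mem_Ioc] at ha
      exact hden a (by omega)
    rw [hsplitN, hsplitD, hA, hB]
    rw [mul_comm (∏ i ∈ Ioc (k-1) (d-1), den i) (∏ i ∈ Ioc 0 (k-1), g i)]
    rw [mul_div_mul_right _ _ hE]
end

section
/- For all integers k ≥ 2, the function d ↦ ∏_{i=1}^{min(k-1,d-1)} ((k-1)d - k + i + 1)/(kd - i) is monotone decreasing in d (for d ≥ 1) and tends to (1 - 1/k)^{k-1} as d → ∞. -/
open Filter Finset Nat

private lemma factne (n : ℕ) : ((n ! : ℕ) : ℝ) ≠ 0 := by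
  exact_mod_cast Nat.factorial_ne_zero n

private lemma prodA (c m : ℕ) : ∏ i ∈ Icc 1 m, ((c:ℝ) + i) = ((c+m)! : ℝ) / (c ! : ℝ) := by
  induction m with
  | zero => simp [div_self (factne c)]
  | succ m ih =>
    rw [Finset.prod_Icc_succ_top (by omega : 1 ≤ m + 1), ih,
      show c + (m+1) = (c+m)+1 from rfl, Nat.factorial_succ]
    have hF := factne (c + m)
    push_cast
    field_simp
    ring

private lemma prodB (c : ℕ) : ∀ n, n ≤ c → ∏ j ∈ range n, ((c:ℝ) - j) = (c ! : ℝ) / ((c - n)! : ℝ) := by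
  intro n
  induction n with
  | zero => simp [div_self (factne c)]
  | succ n ih =>
    intro h
    rw [Finset.prod_range_succ, ih (by omega)]
    have e : c - n = (c - (n+1)) + 1 := by omega
    have e2 : ((c - (n+1) : ℕ) : ℝ) = (c:ℝ) - (n+1) := by
      push_cast [Nat.cast_sub h]; ring
    have e3 : (c:ℝ) - n = ((c - (n+1) : ℕ) : ℝ) + 1 := by rw [e2]; ring
    rw [e, Nat.factorial_succ, e3, Nat.cast_mul, Nat.cast_add_one]
    have hF := factne (c - (n+1))
    have hy : ((c - (n+1) : ℕ) : ℝ) + 1 ≠ 0 := by positivity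
    rw [mul_comm (((c - (n+1) : ℕ) : ℝ) + 1) (((c - (n+1))! : ℕ) : ℝ), ← div_div,
      div_mul_cancel₀ _ hy]

private lemma prodC (c m : ℕ) (h : m ≤ c) :
    ∏ i ∈ Icc 1 m, ((c:ℝ) + 1 - i) = (c ! : ℝ) / ((c - m)! : ℝ) := by
  rw [← Finset.Ico_add_one_right_eq_Icc, Finset.prod_Ico_eq_prod_range]
  rw [show m + 1 - 1 = m from rfl, ← prodB c m h]
  apply Finset.prod_congr rfl
  intro j _
  push_cast
  ring

private lemma key (a b : ℕ) :
    ∏ i ∈ Icc 1 (min a b), ((((a*b : ℕ)):ℝ) + i) / ((((a*b+a+b : ℕ)):ℝ) + 1 - i)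
    = ∏ j ∈ range a, ((((a*b+a : ℕ)):ℝ) - j) / ((((a*b+a+b : ℕ)):ℝ) - j) := by
  have h1 : a ≤ a*b+a+b := le_trans (Nat.le_add_left a (a*b)) (Nat.le_add_right _ b)
  have h2 : min a b ≤ a*b+a+b := le_trans (min_le_left a b) h1
  have h3 : a ≤ a*b+a := Nat.le_add_left a (a*b)
  rw [Finset.prod_div_distrib, Finset.prod_div_distrib, prodA, prodC _ _ h2,
    prodB _ _ h1, prodB _ _ h3, Nat.add_sub_cancel,
    show a*b+a+b = a*b+b+a by ring, Nat.add_sub_cancel]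
  rcases le_total a b with hab | hab
  · rw [min_eq_left hab]
    rw [show a*b+b+a-a = a*b+b by omega]
  · rw [min_eq_right hab, show a*b+b+a-b = a*b+a by omega,
      show a*b+b+a = a*b+a+b by ring]
    have f1 := factne (a*b)
    have f2 := factne (a*b+a)
    have f3 := factne (a*b+b)
    have f4 := factne (a*b+a+b)
    field_simp

private lemma keyk (k d : ℕ) (hk : 2 ≤ k) (hd : 1 ≤ d) :
    ∏ i ∈ Icc 1 (min (k - 1) (d - 1)),
        ((((k : ℝ) - 1) * d - k + i + 1) / ((k : ℝ) * d - i))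
    = ∏ j ∈ range (k-1), ((((k:ℝ)-1)*d - j) / ((k:ℝ)*d - 1 - j)) := by
  obtain ⟨a, rfl⟩ : ∃ a, k = a + 1 := ⟨k - 1, by omega⟩
  obtain ⟨b, rfl⟩ : ∃ b, d = b + 1 := ⟨d - 1, by omega⟩
  have e1 : (a + 1) - 1 = a := by omega
  have e2 : (b + 1) - 1 = b := by omega
  rw [e1, e2]
  rw [show (∏ i ∈ Icc 1 (min a b),
        ((((a+1 : ℕ) : ℝ) - 1) * ((b+1 : ℕ) : ℝ) - ((a+1:ℕ)) + i + 1) /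
          (((a+1 : ℕ) : ℝ) * ((b+1 : ℕ):ℝ) - i))
      = ∏ i ∈ Icc 1 (min a b), ((((a*b : ℕ)):ℝ) + i) / ((((a*b+a+b : ℕ)):ℝ) + 1 - i)
      from Finset.prod_congr rfl (fun i _ => by push_cast; ring_nf)]
  rw [key a b]
  apply Finset.prod_congr rfl
  intro j _
  push_cast
  ring_nf

/-- For fixed `k ≥ 2`, the map
`d ↦ ∏_{i=1}^{min(k-1,d-1)} ((k-1)d-k+i+1)/(kd-i)` (i.e. `P(dk,d,k)`)
is monotone decreasing in `d` (for `d ≥ 1`) and tends to `(1-1/k)^(k-1)` as `d → ∞`. -/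
theorem stmt1 (k : ℕ) (hk : 2 ≤ k) :
    (∀ d₁ d₂ : ℕ, 1 ≤ d₁ → d₁ ≤ d₂ →
      ∏ i ∈ Finset.Icc 1 (min (k - 1) (d₂ - 1)),
          ((((k : ℝ) - 1) * d₂ - k + i + 1) / ((k : ℝ) * d₂ - i)) ≤
      ∏ i ∈ Finset.Icc 1 (min (k - 1) (d₁ - 1)),
          ((((k : ℝ) - 1) * d₁ - k + i + 1) / ((k : ℝ) * d₁ - i))) ∧
    Tendsto (fun d : ℕ =>
      ∏ i ∈ Finset.Icc 1 (min (k - 1) (d - 1)),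
          ((((k : ℝ) - 1) * d - k + i + 1) / ((k : ℝ) * d - i)))
      atTop (nhds ((1 - 1 / (k : ℝ)) ^ (k - 1))) := by
  have hk' : (2:ℝ) ≤ (k:ℝ) := by exact_mod_cast hk
  constructor
  · intro d₁ d₂ hd₁ hd₁₂
    rw [keyk k d₁ hk hd₁, keyk k d₂ hk (le_trans hd₁ hd₁₂)]
    have hd1 : (1:ℝ) ≤ (d₁:ℝ) := by exact_mod_cast hd₁
    have hdd : (d₁:ℝ) ≤ (d₂:ℝ) := by exact_mod_cast hd₁₂
    have hd2 : (1:ℝ) ≤ (d₂:ℝ) := le_trans hd1 hdd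
    apply Finset.prod_le_prod
    · intro j hj
      have hj' : (j:ℝ) ≤ (k:ℝ) - 2 := by
        have hjk : j + 2 ≤ k := by have := Finset.mem_range.mp hj; omega
        have : ((j:ℝ)) + 2 ≤ (k:ℝ) := by exact_mod_cast hjk
        linarith
      apply div_nonneg
      · nlinarith [mul_nonneg (by linarith : (0:ℝ) ≤ (k:ℝ)-1) (by linarith : (0:ℝ) ≤ (d₂:ℝ)-1)]
      · nlinarith [mul_nonneg (by linarith : (0:ℝ) ≤ (k:ℝ)) (by linarith : (0:ℝ) ≤ (d₂:ℝ)-1)]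
    · intro j hj
      have hj' : (j:ℝ) ≤ (k:ℝ) - 2 := by
        have hjk : j + 2 ≤ k := by have := Finset.mem_range.mp hj; omega
        have : ((j:ℝ)) + 2 ≤ (k:ℝ) := by exact_mod_cast hjk
        linarith
      have p1 : 0 < (k:ℝ)*d₁ - 1 - j := by
        nlinarith [mul_nonneg (by linarith : (0:ℝ) ≤ (k:ℝ)) (by linarith : (0:ℝ) ≤ (d₁:ℝ)-1)]
      have p2 : 0 < (k:ℝ)*d₂ - 1 - j := by
        nlinarith [mul_nonneg (by linarith : (0:ℝ) ≤ (k:ℝ)) (by linarith : (0:ℝ) ≤ (d₂:ℝ)-1)]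
      rw [div_le_div_iff₀ p2 p1]
      nlinarith [mul_nonneg (by linarith : (0:ℝ) ≤ (d₂:ℝ) - d₁)
        (by linarith : (0:ℝ) ≤ (k:ℝ) - 1 - j)]
  · have hev : (fun d : ℕ => ∏ i ∈ Finset.Icc 1 (k-1),
        ((((k:ℝ)-1)*d - k + i + 1)/((k:ℝ)*d - i)))
        =ᶠ[atTop] (fun d : ℕ => ∏ i ∈ Finset.Icc 1 (min (k-1) (d-1)),
        ((((k:ℝ)-1)*d - k + i + 1)/((k:ℝ)*d - i))) := by
      filter_upwards [eventually_ge_atTop k] with d hd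
      rw [min_eq_left (by omega)]
    apply Tendsto.congr' hev
    have hk0 : (k:ℝ) ≠ 0 := by positivity
    have hlim : ∀ i ∈ Finset.Icc 1 (k-1), Tendsto
        (fun d : ℕ => (((k:ℝ)-1)*d - k + i + 1)/((k:ℝ)*d - i)) atTop (nhds (1 - 1/(k:ℝ))) := by
      intro i _
      have base : Tendsto (fun d : ℕ =>
          (((k:ℝ)-1) + (-(k:ℝ)+i+1)/d) / ((k:ℝ) + (-(i:ℝ))/d)) atTop
          (nhds ((((k:ℝ)-1) + 0)/((k:ℝ) + 0))) := by
        apply Tendsto.div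
        · exact tendsto_const_nhds.add (tendsto_const_div_atTop_nhds_zero_nat _)
        · exact tendsto_const_nhds.add (tendsto_const_div_atTop_nhds_zero_nat _)
        · simpa using hk0
      have heq : (((k:ℝ)-1) + 0)/((k:ℝ) + 0) = 1 - 1/(k:ℝ) := by
        field_simp
        ring
      rw [heq] at base
      apply base.congr'
      filter_upwards [eventually_ge_atTop 1] with d hd
      have hd0 : (d:ℝ) ≠ 0 := by
        have : (1:ℝ) ≤ (d:ℝ) := by exact_mod_cast hd
        linarith
      have e1 : ((k:ℝ)-1) + (-(k:ℝ)+i+1)/d = ((((k:ℝ)-1)*d - k + i + 1))/d := by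
        field_simp; ring
      have e2 : (k:ℝ) + (-(i:ℝ))/d = ((k:ℝ)*d - i)/d := by
        field_simp; ring
      rw [e1, e2, div_div_div_cancel_right₀ hd0]
    have := tendsto_finset_prod (Finset.Icc 1 (k-1)) hlim
    simpa [Finset.prod_const, Nat.card_Icc] using this
end

section
/- For all integers d ≥ 1 and k ≥ 2, ∏_{i=1}^{min(k-1,d-1)} ((k-1)d - k + i + 1)/(kd - i) ≥ (1 - 1/k)^{k-1}. -/
open Finset

/-- Bernoulli-based step: `((m+1)/(m+2))^(m+1) ≤ (m/(m+1))^m`. -/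
lemma step_lemma (m : ℕ) :
    (((m : ℝ) + 1) / ((m : ℝ) + 2)) ^ (m + 1) ≤ ((m : ℝ) / ((m : ℝ) + 1)) ^ m := by
  have hx0 : (0:ℝ) ≤ (m:ℝ) := Nat.cast_nonneg m
  have hsq : (0:ℝ) < ((m:ℝ) + 1) ^ 2 := by positivity
  have h1 : 1 - (m:ℝ) / ((m:ℝ) + 1) ^ 2 ≤ (1 - 1 / ((m:ℝ) + 1) ^ 2) ^ m := by
    have hBern := one_add_mul_le_pow (a := -(1 / ((m:ℝ) + 1) ^ 2)) (by
      have h : 1 / ((m:ℝ)+1)^2 ≤ 1 := by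
        rw [div_le_one hsq]; nlinarith
      linarith) m
    have e : (1 + (m:ℝ) * (-(1 / ((m:ℝ) + 1) ^ 2))) = 1 - (m:ℝ)/((m:ℝ)+1)^2 := by ring
    have e2 : (1 + (-(1 / ((m:ℝ) + 1) ^ 2))) = 1 - 1/((m:ℝ)+1)^2 := by ring
    rw [e, e2] at hBern
    exact hBern
  have h2 : ((m:ℝ) + 1) / ((m:ℝ) + 2) ≤ 1 - (m:ℝ) / ((m:ℝ) + 1) ^ 2 := by
    rw [div_le_iff₀ (by linarith : (0:ℝ) < (m:ℝ) + 2)]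
    have expand : (1 - (m:ℝ)/((m:ℝ)+1)^2) * ((m:ℝ)+2)
        = ((((m:ℝ)+1)^2 - m)*((m:ℝ)+2))/((m:ℝ)+1)^2 := by
      field_simp
    rw [expand, le_div_iff₀ hsq]
    nlinarith
  calc (((m:ℝ) + 1) / ((m:ℝ) + 2)) ^ (m + 1)
      = (((m:ℝ) + 1) / ((m:ℝ) + 2)) ^ m * (((m:ℝ) + 1) / ((m:ℝ) + 2)) := by ring
    _ ≤ (((m:ℝ) + 1) / ((m:ℝ) + 2)) ^ m * ((1 - 1 / ((m:ℝ) + 1) ^ 2) ^ m) :=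
        mul_le_mul_of_nonneg_left (le_trans h2 h1) (by positivity)
    _ = ((((m:ℝ) + 1) / ((m:ℝ) + 2)) * (1 - 1 / ((m:ℝ) + 1) ^ 2)) ^ m := by
        rw [mul_pow]
    _ = ((m:ℝ) / ((m:ℝ) + 1)) ^ m := by
        congr 1
        field_simp
        ring

/-- Monotonicity: `((n-1)/n)^(n-1)` is antitone for `n ≥ 2`. -/
lemma mono_lemma (d k : ℕ) (hd : 2 ≤ d) (hdk : d ≤ k) :
    (((k : ℝ) - 1) / k) ^ (k - 1) ≤ (((d : ℝ) - 1) / d) ^ (d - 1) := by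
  induction k, hdk using Nat.le_induction with
  | base => exact le_refl _
  | succ n hn ih =>
    refine le_trans ?_ ih
    have hn2 : 2 ≤ n := le_trans hd hn
    have h := step_lemma (n - 1)
    have hc : ((n - 1 : ℕ) : ℝ) = (n : ℝ) - 1 := by
      push_cast [Nat.cast_sub (by omega : 1 ≤ n)]; ring
    rw [hc] at h
    have e1 : (n : ℝ) - 1 + 1 = (n : ℝ) := by ring
    have e2 : (n : ℝ) - 1 + 2 = (n : ℝ) + 1 := by ring
    rw [e1, e2] at h
    have e3 : n - 1 + 1 = n := by omega
    rw [e3] at h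
    have e4 : n + 1 - 1 = n := by omega
    rw [e4]
    have e5 : ((n : ℝ) + 1 - 1) = (n : ℝ) := by ring
    push_cast
    rw [e5]
    exact h

/-- Key pairing lemma: for `2 ≤ a ≤ b`,
`∏_{i=1}^{a-1} (ab - a - b + 1 + i)/(ab - i) ≥ ((a-1)/a)^(a-1)`. -/
lemma key_lemma (a b : ℕ) (h2 : 2 ≤ a) (hab : a ≤ b) :
    (((a : ℝ) - 1) / a) ^ (a - 1) ≤
      ∏ i ∈ Finset.Icc 1 (a - 1),
        (((a : ℝ) * b - a - b + 1 + i) / ((a : ℝ) * b - i)) := by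
  have hb2 : 2 ≤ b := le_trans h2 hab
  have ha : (2:ℝ) ≤ (a:ℝ) := by exact_mod_cast h2
  have hbR : (a:ℝ) ≤ (b:ℝ) := by exact_mod_cast hab
  -- split into numerator and denominator products
  rw [Finset.prod_div_distrib]
  -- reindex the numerator product by i ↦ a - i
  have hre : ∏ i ∈ Finset.Icc 1 (a - 1), ((a : ℝ) * b - a - b + 1 + i)
      = ∏ i ∈ Finset.Icc 1 (a - 1), ((a : ℝ) * b - b + 1 - i) := by
    apply Finset.prod_nbij' (fun i => a - i) (fun i => a - i)
    · intro i hi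
      simp only [Finset.mem_Icc] at hi ⊢
      omega
    · intro i hi
      simp only [Finset.mem_Icc] at hi ⊢
      omega
    · intro i hi
      simp only [Finset.mem_Icc] at hi
      omega
    · intro i hi
      simp only [Finset.mem_Icc] at hi
      omega
    · intro i hi
      simp only [Finset.mem_Icc] at hi
      have : ((a - i : ℕ) : ℝ) = (a : ℝ) - i := by
        push_cast [Nat.cast_sub (by omega : i ≤ a)]; ring
      rw [this]
      ring
  rw [hre, ← Finset.prod_div_distrib]
  -- termwise comparison
  have hcard : (Finset.Icc 1 (a - 1)).card = a - 1 := by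
    rw [Nat.card_Icc]; omega
  have hconst : (((a : ℝ) - 1) / a) ^ (a - 1)
      = ∏ _i ∈ Finset.Icc 1 (a - 1), (((a : ℝ) - 1) / a) := by
    rw [Finset.prod_const, hcard]
  rw [hconst]
  apply Finset.prod_le_prod
  · intro i hi
    have h1 : (0:ℝ) ≤ (a:ℝ) - 1 := by linarith
    positivity
  · intro i hi
    simp only [Finset.mem_Icc] at hi
    have hiR : (i : ℝ) ≤ (a : ℝ) - 1 := by
      have : ((i:ℕ):ℝ) ≤ ((a-1:ℕ):ℝ) := by exact_mod_cast hi.2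
      rwa [Nat.cast_sub (by omega : 1 ≤ a), Nat.cast_one] at this
    have hi1 : (1:ℝ) ≤ (i:ℝ) := by exact_mod_cast hi.1
    have hden : (0:ℝ) < (a : ℝ) * b - i := by nlinarith
    rw [div_le_div_iff₀ (by linarith) hden]
    nlinarith

/-- For `d ≥ 1`, `k ≥ 2`:
`∏_{i=1}^{min(k-1,d-1)} ((k-1)d-k+i+1)/(kd-i) ≥ (1-1/k)^(k-1)`. -/
theorem stmt2 (d k : ℕ) (hd : 1 ≤ d) (hk : 2 ≤ k) :
    (1 - 1 / (k : ℝ)) ^ (k - 1) ≤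
      ∏ i ∈ Finset.Icc 1 (min (k - 1) (d - 1)),
        ((((k : ℝ) - 1) * d - k + i + 1) / ((k : ℝ) * d - i)) := by
  have hkR : (2:ℝ) ≤ (k:ℝ) := by exact_mod_cast hk
  have hk0 : (0:ℝ) < (k:ℝ) := by linarith
  have hbase : (1 - 1 / (k : ℝ)) = ((k:ℝ) - 1) / k := by
    field_simp
  rcases Nat.lt_or_ge d 2 with hd1 | hd2
  · -- d = 1 : product is empty
    have hmin : min (k - 1) (d - 1) = 0 := by omega
    rw [hmin, show Finset.Icc 1 0 = (∅ : Finset ℕ) by rfl, Finset.prod_empty]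
    apply pow_le_one₀
    · rw [hbase]; apply div_nonneg <;> linarith
    · rw [hbase, div_le_one hk0]; linarith
  · rcases le_total k d with hkd | hdk
    · -- k ≤ d : m = k - 1, direct application of key
      have hmin : min (k - 1) (d - 1) = k - 1 := by omega
      rw [hmin, hbase]
      refine le_trans (key_lemma k d hk hkd) (le_of_eq ?_)
      apply Finset.prod_congr rfl
      intro i _
      ring_nf
    · -- d ≤ k : use symmetry and monotonicity
      have hmin : min (k - 1) (d - 1) = d - 1 := by omega
      rw [hmin, hbase]
      calc (((k:ℝ) - 1) / k) ^ (k - 1)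
          ≤ (((d:ℝ) - 1) / d) ^ (d - 1) := mono_lemma d k hd2 hdk
        _ ≤ ∏ i ∈ Finset.Icc 1 (d - 1),
              (((d : ℝ) * k - d - k + 1 + i) / ((d : ℝ) * k - i)) :=
            key_lemma d k hd2 hdk
        _ = _ := by
            apply Finset.prod_congr rfl
            intro i _
            ring_nf
end

section
/- For all integers d ≥ 1 and k ≥ 2, ∏_{i=1}^{min(k-1,d-1)} ((k-1)d - k + i + 1)/(kd - i) ≥ (1 - 1/d)^{d-1}. -/
private lemma pairlem (K D x : ℝ) (hK : 1 ≤ K) (hD : 1 ≤ D) (hx0 : 0 ≤ x)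
    (hxD : x ≤ D - 1) (h1 : 0 < K * D - x) (h2 : 0 < K * D - (D - x)) :
    (1 - 1 / D) ^ 2 ≤
      ((K - 1) * (D - 1) + x) / (K * D - x) *
        (((K - 1) * (D - 1) + (D - x)) / (K * D - (D - x))) := by
  have hD0 : (0:ℝ) < D := by linarith
  have h1D : (1 : ℝ) - 1 / D = (D - 1) / D := by field_simp
  rw [h1D, div_mul_div_comm, div_pow, div_le_div_iff₀ (by positivity) (by positivity)]
  have hp : 0 ≤ x * (D - x) := mul_nonneg hx0 (by linarith)
  have hq : 0 ≤ (K - 1) * (D - 1) := mul_nonneg (by linarith) (by linarith)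
  nlinarith [mul_nonneg hp (by linarith : (0:ℝ) ≤ 2 * D - 1),
    mul_nonneg hq (sq_nonneg D)]

private lemma steplem (n : ℕ) (hn : 2 ≤ n) :
    (1 - 1 / ((n : ℝ) + 1)) ^ n ≤ (1 - 1 / (n : ℝ)) ^ (n - 1) := by
  have hn1 : (2 : ℝ) ≤ n := by exact_mod_cast hn
  have hx0 : (0 : ℝ) ≤ 1 - 1 / ((n : ℝ) + 1) := by
    have : 1 / ((n:ℝ)+1) ≤ 1 := by rw [div_le_one (by linarith)]; linarith
    linarith
  have hbern : 1 + ((n - 1 : ℕ) : ℝ) * (-(1 / (n : ℝ) ^ 2)) ≤ (1 + (-(1 / (n : ℝ) ^ 2))) ^ (n - 1) := by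
    apply one_add_mul_le_pow
    have : 1 / (n:ℝ)^2 ≤ 1 := by rw [div_le_one (by positivity)]; nlinarith
    linarith
  have hcast : ((n - 1 : ℕ) : ℝ) = (n : ℝ) - 1 := by
    push_cast [Nat.cast_sub (by omega : 1 ≤ n)]; ring
  have hx : 1 - 1 / ((n : ℝ) + 1) ≤ (1 - 1 / (n : ℝ) ^ 2) ^ (n - 1) := by
    have hdiv : ((n:ℝ) - 1) / (n:ℝ)^2 ≤ 1 / ((n:ℝ)+1) := by
      rw [div_le_div_iff₀ (by positivity) (by linarith)]; nlinarith
    have h2 : 1 - 1 / ((n:ℝ)+1) ≤ 1 + ((n - 1 : ℕ) : ℝ) * (-(1 / (n : ℝ) ^ 2)) := by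
      rw [hcast]
      have e : ((n:ℝ) - 1) * (-(1 / (n:ℝ)^2)) = -(((n:ℝ)-1)/(n:ℝ)^2) := by ring
      rw [e]; linarith
    calc 1 - 1 / ((n:ℝ)+1) ≤ 1 + ((n - 1 : ℕ) : ℝ) * (-(1 / (n : ℝ) ^ 2)) := h2
      _ ≤ (1 + (-(1 / (n : ℝ) ^ 2))) ^ (n - 1) := hbern
      _ = (1 - 1 / (n : ℝ) ^ 2) ^ (n - 1) := by ring_nf
  calc (1 - 1 / ((n : ℝ) + 1)) ^ n
      = (1 - 1 / ((n : ℝ) + 1)) ^ (n - 1) * (1 - 1 / ((n : ℝ) + 1)) := by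
        rw [← pow_succ]; congr 1; omega
    _ ≤ (1 - 1 / ((n : ℝ) + 1)) ^ (n - 1) * (1 - 1 / (n : ℝ) ^ 2) ^ (n - 1) :=
        mul_le_mul_of_nonneg_left hx (pow_nonneg hx0 _)
    _ = ((1 - 1 / ((n : ℝ) + 1)) * (1 - 1 / (n : ℝ) ^ 2)) ^ (n - 1) := (mul_pow _ _ _).symm
    _ = (1 - 1 / (n : ℝ)) ^ (n - 1) := by
        congr 1
        have h0 : (n:ℝ) ≠ 0 := by linarith
        have h1' : (n:ℝ) + 1 ≠ 0 := by linarith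
        field_simp
        ring

private lemma monolem (k : ℕ) (hk : 2 ≤ k) (d : ℕ) (hkd : k ≤ d) :
    (1 - 1 / (d : ℝ)) ^ (d - 1) ≤ (1 - 1 / (k : ℝ)) ^ (k - 1) := by
  induction d, hkd using Nat.le_induction with
  | base => exact le_refl _
  | succ n hn ih =>
    have h1 : (1 - 1 / ((n + 1 : ℕ) : ℝ)) ^ (n + 1 - 1) ≤ (1 - 1 / (n : ℝ)) ^ (n - 1) := by
      have h := steplem n (le_trans hk hn)
      push_cast
      simpa using h
    exact le_trans h1 ih

/-- For `d ≥ 1`, `k ≥ 2`: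
`∏_{i=1}^{min(k-1,d-1)} ((k-1)d-k+i+1)/(kd-i) ≥ (1-1/d)^(d-1)`. -/
theorem stmt3 (d k : ℕ) (hd : 1 ≤ d) (hk : 2 ≤ k) :
    (1 - 1 / (d : ℝ)) ^ (d - 1) ≤
      ∏ i ∈ Finset.Icc 1 (min (k - 1) (d - 1)),
        ((((k : ℝ) - 1) * d - k + i + 1) / ((k : ℝ) * d - i)) := by
  rcases eq_or_lt_of_le hd with h1 | hd2
  · rw [← h1]; simp
  · have hd2 : 2 ≤ d := hd2
    set s := min k d with hs
    have hs2 : 2 ≤ s := le_min hk hd2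
    have hsk : s ≤ k := min_le_left _ _
    have hsd : s ≤ d := min_le_right _ _
    have hm : min (k - 1) (d - 1) = s - 1 := by omega
    rw [hm]
    set m := s - 1 with hmdef
    set f : ℕ → ℝ := fun i => (((k : ℝ) - 1) * d - k + i + 1) / ((k : ℝ) * d - i) with hf
    have hkR : (2:ℝ) ≤ k := by exact_mod_cast hk
    have hdR : (2:ℝ) ≤ d := by exact_mod_cast hd2
    have hsRk : (s:ℝ) ≤ k := by exact_mod_cast hsk
    have hsRd : (s:ℝ) ≤ d := by exact_mod_cast hsd
    have hsR2 : (2:ℝ) ≤ s := by exact_mod_cast hs2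
    have hmR : (m:ℝ) = (s:ℝ) - 1 := by
      rw [hmdef]; push_cast [Nat.cast_sub (by omega : 1 ≤ s)]; ring
    have hfpos : ∀ i ∈ Finset.Icc 1 m, 0 < f i := by
      intro i hi
      simp only [Finset.mem_Icc] at hi
      have hiR : (1:ℝ) ≤ i := by exact_mod_cast hi.1
      have hiR2 : (i:ℝ) ≤ (s:ℝ) - 1 := by
        have h := (by exact_mod_cast hi.2 : (i:ℝ) ≤ (m:ℝ)); linarith [hmR ▸ h]
      simp only [hf]
      apply div_pos <;> nlinarith
    set P : ℝ := ∏ i ∈ Finset.Icc 1 m, f i with hP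
    have hPpos : 0 < P := Finset.prod_pos hfpos
    have hpair : ∀ i ∈ Finset.Icc 1 m, (1 - 1 / (s : ℝ)) ^ 2 ≤ f i * f (s - i) := by
      intro i hi
      simp only [Finset.mem_Icc] at hi
      have hi1 : 1 ≤ i := hi.1
      have him : i ≤ m := hi.2
      have hcast : ((s - i : ℕ) : ℝ) = (s : ℝ) - (i : ℝ) := by
        push_cast [Nat.cast_sub (by omega : i ≤ s)]; ring
      have hiR : (1:ℝ) ≤ i := by exact_mod_cast hi1
      have hiR2 : (i:ℝ) ≤ (s:ℝ) - 1 := by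
        have h := (by exact_mod_cast him : (i:ℝ) ≤ (m:ℝ)); linarith [hmR ▸ h]
      rcases min_choice k d with hse | hse
      · -- s = k
        have hsR : (s:ℝ) = (k:ℝ) := by exact_mod_cast congrArg (Nat.cast (R := ℝ)) hse
        rw [hsR] at hiR2
        have h2k : (2:ℝ) * k ≤ (d:ℝ) * k := by nlinarith
        have key := pairlem (d:ℝ) (k:ℝ) (i:ℝ) (by linarith) (by linarith) (by linarith)
          hiR2 (by linarith) (by linarith)
        have heq : f i * f (s - i) =
            (((d:ℝ) - 1) * ((k:ℝ) - 1) + (i:ℝ)) / ((d:ℝ) * (k:ℝ) - (i:ℝ)) *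
              ((((d:ℝ) - 1) * ((k:ℝ) - 1) + ((k:ℝ) - (i:ℝ))) /
                ((d:ℝ) * (k:ℝ) - ((k:ℝ) - (i:ℝ)))) := by
          simp only [hf]
          rw [hcast, hsR]
          ring
        rw [heq, hsR]
        exact key
      · -- s = d
        have hsR : (s:ℝ) = (d:ℝ) := by exact_mod_cast congrArg (Nat.cast (R := ℝ)) hse
        rw [hsR] at hiR2
        have h2d : (2:ℝ) * d ≤ (k:ℝ) * d := by nlinarith
        have key := pairlem (k:ℝ) (d:ℝ) (i:ℝ) (by linarith) (by linarith) (by linarith)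
          hiR2 (by linarith) (by linarith)
        have heq : f i * f (s - i) =
            (((k:ℝ) - 1) * ((d:ℝ) - 1) + (i:ℝ)) / ((k:ℝ) * (d:ℝ) - (i:ℝ)) *
              ((((k:ℝ) - 1) * ((d:ℝ) - 1) + ((d:ℝ) - (i:ℝ))) /
                ((k:ℝ) * (d:ℝ) - ((d:ℝ) - (i:ℝ)))) := by
          simp only [hf]
          rw [hcast, hsR]
          ring
        rw [heq, hsR]
        exact key
    have hrefl : ∏ i ∈ Finset.Icc 1 m, f (s - i) = P := by
      rw [hP]
      apply Finset.prod_nbij' (fun i => s - i) (fun i => s - i)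
      · intro a ha; simp only [Finset.mem_Icc] at ha ⊢; omega
      · intro a ha; simp only [Finset.mem_Icc] at ha ⊢; omega
      · intro a ha; simp only [Finset.mem_Icc] at ha; omega
      · intro a ha; simp only [Finset.mem_Icc] at ha; omega
      · intro a ha; rfl
    have hprodsq : P ^ 2 = ∏ i ∈ Finset.Icc 1 m, (f i * f (s - i)) := by
      rw [Finset.prod_mul_distrib, hrefl, hP, sq]
    have hsq : ((1 - 1 / (s:ℝ)) ^ m) ^ 2 ≤ P ^ 2 := by
      calc ((1 - 1 / (s:ℝ)) ^ m) ^ 2 = ∏ _i ∈ Finset.Icc 1 m, (1 - 1 / (s:ℝ)) ^ 2 := by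
            rw [Finset.prod_const, Nat.card_Icc, ← pow_mul, ← pow_mul]
            congr 1
            omega
        _ ≤ ∏ i ∈ Finset.Icc 1 m, (f i * f (s - i)) :=
            Finset.prod_le_prod (fun i _ => sq_nonneg _) hpair
        _ = P ^ 2 := hprodsq.symm
    have hPge : (1 - 1 / (s:ℝ)) ^ m ≤ P :=
      le_of_pow_le_pow_left₀ two_ne_zero hPpos.le hsq
    have hmono : (1 - 1 / (d:ℝ)) ^ (d - 1) ≤ (1 - 1 / (s:ℝ)) ^ (s - 1) :=
      monolem s hs2 d hsd
    exact le_trans hmono hPge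
end

section
/- For every integer d ≥ 2, the sequence k ↦ (1 + (k-1)((k-2)/(k-1))^k)/k is monotone decreasing in k (for k ≥ 2) and converges to 1/e as k → ∞. -/
open Filter

open Finset in
private lemma ch2' (n : ℕ) : 2 * (n+2).choose 2 = (n+2)*(n+1) := by
  induction n with
  | zero => decide
  | succ n ih =>
    rw [show n+1+2 = (n+2)+1 from rfl, Nat.choose_succ_succ' (n+2) 1]
    rw [Nat.mul_add, ih, Nat.choose_one_right]; ring

open Finset in
private lemma ch3' (n : ℕ) : 6 * (n+3).choose 3 = (n+3)*(n+2)*(n+1) := by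
  induction n with
  | zero => decide
  | succ n ih =>
    rw [show n+1+3 = (n+3)+1 from rfl, Nat.choose_succ_succ' (n+3) 2]
    rw [Nat.mul_add, ih, show (6:ℕ) = 3*2 from rfl, Nat.mul_assoc, ch2']; ring

open Finset in
private lemma keyX' (m x : ℕ) (hx : x = (m+3)*(m+1)) :
    (x+1)^(m+3) ≤ (x+(m+3))^(m+2) + (x^(m+3) + (m+1)*x^(m+2)) := by
  rw [add_pow x 1 (m+3), add_pow x (m+3) (m+2)]
  simp only [one_pow, mul_one, Nat.cast_id]
  rw [Finset.sum_range_succ _ (m+3), Nat.choose_self, mul_one]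
  rw [Finset.sum_range_succ _ (m+2), Finset.sum_range_succ _ (m+1), Finset.sum_range_succ _ m,
      Finset.sum_range_succ (fun i => x^i*(m+3)^(m+2-i)*(m+2).choose i) (m+2),
      Finset.sum_range_succ (fun i => x^i*(m+3)^(m+2-i)*(m+2).choose i) (m+1),
      Finset.sum_range_succ (fun i => x^i*(m+3)^(m+2-i)*(m+2).choose i) m]
  simp only [Nat.choose_self, Nat.sub_self, pow_zero, mul_one,
    show m+2-(m+1) = 1 from by omega, show m+2-m = 2 from by omega, pow_one]
  have hsum : ∑ i ∈ range m, x^i * (m+3).choose i ≤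
      ∑ i ∈ range m, x^i*(m+3)^(m+2-i)*(m+2).choose i := by
    apply Finset.sum_le_sum
    intro i hi
    have hi' : i < m := Finset.mem_range.mp hi
    have hb : (m+3).choose i ≤ (m+3) * (m+2).choose i := by
      have h : (m+2).choose i * (m+3) = (m+3).choose i * (m+3-i) :=
        Nat.choose_mul_succ_eq (m+2) i
      calc (m+3).choose i ≤ (m+3).choose i * (m+3-i) :=
            Nat.le_mul_of_pos_right _ (by omega)
        _ = (m+2).choose i * (m+3) := h.symm
        _ = (m+3) * (m+2).choose i := Nat.mul_comm _ _
    calc x^i * (m+3).choose i ≤ x^i * ((m+3) * (m+2).choose i) := Nat.mul_le_mul_left _ hb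
      _ ≤ x^i * ((m+3)^(m+2-i) * (m+2).choose i) := by
          apply Nat.mul_le_mul_left
          apply Nat.mul_le_mul_right
          exact Nat.le_self_pow (by omega) _
      _ = x^i * (m+3)^(m+2-i) * (m+2).choose i := by ring
  have e1 : (m+3).choose (m+2) = m+3 := by
    have := Nat.choose_symm (show 1 ≤ m+3 by omega)
    simpa using this
  have e2 : (m+2).choose (m+1) = m+2 := by
    have := Nat.choose_symm (show 1 ≤ m+2 by omega)
    simpa using this
  have e3 : (m+2).choose m = (m+2).choose 2 := by
    have := Nat.choose_symm (show 2 ≤ m+2 by omega)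
    simpa using this
  have e4 : (m+3).choose (m+1) = (m+3).choose 2 := by
    have := Nat.choose_symm (show 2 ≤ m+3 by omega)
    simpa using this
  have e5 : (m+3).choose m = (m+3).choose 3 := by
    have := Nat.choose_symm (show 3 ≤ m+3 by omega)
    simpa using this
  rw [e1, e2, e3, e4, e5]
  have c2 : 2 * (m+2).choose 2 = (m+2)*(m+1) := ch2' m
  have c2'' : 2 * (m+3).choose 2 = (m+3)*(m+2) := ch2' (m+1)
  have c3 : 6 * (m+3).choose 3 = (m+3)*(m+2)*(m+1) := ch3' m
  have htop : x^m * (m+3).choose 3 + x^(m+1) * (m+3).choose 2 + x^(m+2) * (m+3)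
      + x^(m+3) ≤
      x^m * ((m+3)^2 * (m+2).choose 2) + x^(m+1) * ((m+3) * (m+2))
      + x^(m+2) + (x^(m+3) + (m+1)*x^(m+2)) := by
    apply Nat.le_of_mul_le_mul_left _ (show 0 < 6 by norm_num)
    have hA : 6 * (x^m * (m+3).choose 3 + x^(m+1) * (m+3).choose 2 + x^(m+2) * (m+3)
        + x^(m+3)) =
        x^m * (6 * (m+3).choose 3) + x^(m+1) * (2 * (m+3).choose 2) * 3
        + 6*(x^(m+2) * (m+3)) + 6*x^(m+3) := by ring
    have hB : 6 * (x^m * ((m+3)^2 * (m+2).choose 2) + x^(m+1) * ((m+3) * (m+2))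
        + x^(m+2) + (x^(m+3) + (m+1)*x^(m+2))) =
        x^m * (m+3)^2 * (2 * (m+2).choose 2) * 3 + 6*(x^(m+1) * ((m+3)*(m+2)))
        + 6*x^(m+2) + 6*x^(m+3) + 6*((m+1)*x^(m+2)) := by ring
    rw [hA, hB, c2, c2'', c3]
    have hdiff : x^m * (m+3)^2 * ((m+2)*(m+1)) * 3 + 6*(x^(m+1) * ((m+3)*(m+2)))
        + 6*x^(m+2) + 6*x^(m+3) + 6*((m+1)*x^(m+2)) =
        (x^m * ((m+3)*(m+2)*(m+1)) + x^(m+1) * ((m+3)*(m+2)) * 3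
        + 6*(x^(m+2) * (m+3)) + 6*x^(m+3)) + x^m * ((m+3)*(m+1)*(5*m+16)) := by
      subst hx
      rw [pow_succ ((m+3)*(m+1)) (m+2), pow_succ ((m+3)*(m+1)) (m+1),
          pow_succ ((m+3)*(m+1)) m]
      ring
    rw [hdiff]
    exact Nat.le_add_right _ _
  calc ∑ i ∈ range m, x ^ i * (m+3).choose i + x^m * (m+3).choose 3 + x^(m+1) * (m+3).choose 2
        + x^(m+2) * (m+3) + x^(m+3)
      ≤ ∑ i ∈ range m, x^i*(m+3)^(m+2-i)*(m+2).choose i + (x^m * ((m+3)^2 * (m+2).choose 2)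
        + x^(m+1) * ((m+3) * (m+2)) + x^(m+2) + (x^(m+3) + (m+1)*x^(m+2))) := by
        omega
    _ = _ := by ring

private lemma keyN' (m : ℕ) :
    (m+2)^(2*(m+3)) ≤ (m+3)^(m+2)*(m+2)^(m+2) + (m+4)*(m+1)^(m+3)*(m+3)^(m+2) := by
  have h := keyX' m ((m+3)*(m+1)) rfl
  have h1 : (m+2)^(2*(m+3)) = ((m+3)*(m+1)+1)^(m+3) := by
    rw [pow_mul]; congr 1; ring
  have h2 : ((m+3)*(m+1)+(m+3))^(m+2) = (m+3)^(m+2)*(m+2)^(m+2) := by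
    rw [show (m+3)*(m+1)+(m+3) = (m+3)*(m+2) by ring, mul_pow]
  have h3 : ((m+3)*(m+1))^(m+3) + (m+1)*((m+3)*(m+1))^(m+2)
      = (m+4)*(m+1)^(m+3)*(m+3)^(m+2) := by
    rw [mul_pow, mul_pow, pow_succ (m+3) (m+2), pow_succ (m+1) (m+2)]
    ring
  omega

private noncomputable def fseq (k : ℕ) : ℝ :=
  (1 + ((k : ℝ) - 1) * (((k : ℝ) - 2) / ((k : ℝ) - 1)) ^ k) / k

private lemma stepR' (k : ℕ) (hk : 2 ≤ k) : fseq (k+1) ≤ fseq k := by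
  rcases Nat.lt_or_ge k 3 with h | h
  · have hk2 : k = 2 := by omega
    subst hk2
    norm_num [fseq]
  · obtain ⟨m, rfl⟩ : ∃ m, k = m + 3 := ⟨k - 3, by omega⟩
    have hkeyR : ((m:ℝ)+2)^(2*(m+3)) ≤
        ((m:ℝ)+3)^(m+2)*((m:ℝ)+2)^(m+2) + ((m:ℝ)+4)*((m:ℝ)+1)^(m+3)*((m:ℝ)+3)^(m+2) := by
      exact_mod_cast keyN' m
    set M : ℝ := (m : ℝ) with hM
    have hM0 : 0 ≤ M := Nat.cast_nonneg m
    have h1 : (0:ℝ) < M + 1 := by linarith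
    have h2 : (0:ℝ) < M + 2 := by linarith
    have h3 : (0:ℝ) < M + 3 := by linarith
    have h4 : (0:ℝ) < M + 4 := by linarith
    have hL : fseq (m+3+1) = ((M+3)^(m+3) + (M+2)^(m+4)) / ((M+4)*(M+3)^(m+3)) := by
      unfold fseq
      push_cast
      rw [div_pow, show (M + 3 + 1 - 2) = M + 2 by ring, show (M + 3 + 1 - 1) = M + 3 by ring,
        show (M + 3 + 1 : ℝ) = M + 4 by ring]
      rw [show (m+3+1) = (m+4) from rfl]
      field_simp
      ring
    have hR : fseq (m+3) = ((M+2)^(m+2) + (M+1)^(m+3)) / ((M+3)*(M+2)^(m+2)) := by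
      unfold fseq
      push_cast
      rw [div_pow, show (M + 3 - 2) = M + 1 by ring, show (M + 3 - 1) = M + 2 by ring]
      field_simp
      ring
    rw [hL, hR, div_le_div_iff₀ (by positivity) (by positivity)]
    have hmul := mul_le_mul_of_nonneg_left hkeyR (le_of_lt h3)
    ring_nf at hmul ⊢
    nlinarith [hmul]

private lemma limitF' : Tendsto (fun k : ℕ =>
    (1 + ((k : ℝ) - 1) * (((k : ℝ) - 2) / ((k : ℝ) - 1)) ^ k) / k)
    atTop (nhds (1 / Real.exp 1)) := by
  have hpow : Tendsto (fun k : ℕ => (((k:ℝ) - 2) / ((k:ℝ) - 1)) ^ k) atTop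
      (nhds (Real.exp (-1))) := by
    have base := Real.tendsto_one_add_div_pow_exp (-1)
    have comp := base.comp (tendsto_sub_atTop_nat 1)
    have hinv : Tendsto (fun k : ℕ => 1 + (-1) / (((k - 1 : ℕ) : ℝ))) atTop (nhds 1) := by
      have : Tendsto (fun k : ℕ => (-1) / (((k - 1 : ℕ) : ℝ))) atTop (nhds 0) := by
        have h0 := (tendsto_one_div_atTop_nhds_zero_nat (𝕜 := ℝ)).comp (tendsto_sub_atTop_nat 1)
        have := h0.neg
        simp only [Function.comp] at this ⊢
        convert this using 2 with k
        · rw [neg_div, one_div]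
        · simp
      simpa using this.const_add 1
    have hmul := comp.mul hinv
    rw [mul_one] at hmul
    apply hmul.congr'
    filter_upwards [eventually_ge_atTop 2] with k hk
    have hc : ((k - 1 : ℕ) : ℝ) = (k : ℝ) - 1 := by
      have : (1:ℕ) ≤ k := by omega
      push_cast [this]; ring
    have hne : (k : ℝ) - 1 ≠ 0 := by
      have : (2:ℝ) ≤ (k:ℝ) := by exact_mod_cast hk
      linarith
    have heq : 1 + (-1) / (((k - 1 : ℕ) : ℝ)) = ((k:ℝ) - 2) / ((k:ℝ) - 1) := by
      rw [hc]
      field_simp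
      ring
    simp only [Function.comp]
    rw [heq]
    rw [← pow_succ]
    congr 1
    omega
  have hone : Tendsto (fun k : ℕ => ((k:ℝ) - 1) / k) atTop (nhds 1) := by
    have : Tendsto (fun k : ℕ => 1 - 1 / (k : ℝ)) atTop (nhds 1) := by
      simpa using (tendsto_one_div_atTop_nhds_zero_nat (𝕜 := ℝ)).const_sub 1
    apply this.congr'
    filter_upwards [eventually_ge_atTop 1] with k hk
    have hne : (k : ℝ) ≠ 0 := by
      have : (1:ℝ) ≤ (k:ℝ) := by exact_mod_cast hk
      linarith
    field_simp
  have hzero := tendsto_one_div_atTop_nhds_zero_nat (𝕜 := ℝ)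
  have hsum := hzero.add (hone.mul hpow)
  rw [zero_add, one_mul] at hsum
  have : (1:ℝ) / Real.exp 1 = Real.exp (-1) := by
    rw [Real.exp_neg, one_div]
  rw [this]
  apply hsum.congr'
  filter_upwards [eventually_ge_atTop 1] with k hk
  have hne : (k : ℝ) ≠ 0 := by
    have : (1:ℝ) ≤ (k:ℝ) := by exact_mod_cast hk
    linarith
  rw [div_mul_eq_mul_div, ← add_div]

/-- For every integer `d ≥ 2`, the sequence `k ↦ (1+(k-1)((k-2)/(k-1))^k)/k`
is monotone decreasing in `k` (for `k ≥ 2`) and converges to `1/e`. -/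
theorem stmt7 (d : ℕ) (hd : 2 ≤ d) :
    (∀ k₁ k₂ : ℕ, 2 ≤ k₁ → k₁ ≤ k₂ →
      (1 + ((k₂ : ℝ) - 1) * (((k₂ : ℝ) - 2) / ((k₂ : ℝ) - 1)) ^ k₂) / k₂ ≤
      (1 + ((k₁ : ℝ) - 1) * (((k₁ : ℝ) - 2) / ((k₁ : ℝ) - 1)) ^ k₁) / k₁) ∧
    Tendsto (fun k : ℕ =>
        (1 + ((k : ℝ) - 1) * (((k : ℝ) - 2) / ((k : ℝ) - 1)) ^ k) / k)
      atTop (nhds (1 / Real.exp 1)) := by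
  constructor
  · intro k₁ k₂ h1 h12
    show fseq k₂ ≤ fseq k₁
    induction k₂, h12 using Nat.le_induction with
    | base => exact le_refl _
    | succ n hn ih =>
      exact le_trans (stepR' n (le_trans h1 hn)) ih
  · exact limitF'
end

section
/- Let n = kd + r with 0 ≤ r < d. Suppose M ⊆ E is a subset of edges of a bipartite graph G = (S,T;E) with |S| = n such that every node of S has degree at most 1 in M, every node of T has degree at most k+1 in M, and at most r nodes of T have degree exactly k+1 in M. Then there exists an ordering s_1,…,s_n of S under which M is a feasible d-distance matching, i.e., for every t ∈ T and any two distinct edges s_i t, s_j t ∈ M, |i - j| ≥ d. -/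
set_option maxHeartbeats 1000000

lemma indexOf_le_of_getElem {α : Type*} [DecidableEq α] :
    ∀ (l : List α) (m : ℕ) (h : m < l.length), l.idxOf (l[m]'h) ≤ m := by
  intro l
  induction l with
  | nil => intro m h; simp at h
  | cons b l ih =>
    intro m h
    cases m with
    | zero => simp [List.idxOf_cons_self]
    | succ m =>
      rw [List.getElem_cons_succ]
      by_cases hb : b = l[m]'(by simpa using h)
      · rw [← hb, List.idxOf_cons_self]; omega
      · rw [List.idxOf_cons_ne _ hb]
        have := ih m (by simpa using h)
        omega

lemma count_eq_card_fiber {β : Type*} [DecidableEq β] :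
    ∀ (L : List β) (a : β),
      (Finset.univ.filter (fun i : Fin L.length => L.get i = a)).card = L.count a := by
  intro L
  induction L with
  | nil => intro a; simp
  | cons b L ih =>
    intro a
    rw [Finset.card_filter]
    erw [Fin.sum_univ_succ]
    rw [List.count_cons, ← ih a, Finset.card_filter]
    simp only [List.get_eq_getElem, List.getElem_cons_succ, List.getElem_cons_zero, Fin.val_succ,
      Fin.val_zero, beq_iff_eq]
    by_cases hb : b = a <;> simp [hb, Nat.add_comm]



lemma indexOf_le_of_getElem' {α : Type*} [DecidableEq α] :
    ∀ (l : List α) (m : ℕ) (h : m < l.length), l.idxOf (l[m]'h) ≤ m := by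
  intro l
  induction l with
  | nil => intro m h; simp at h
  | cons b l ih =>
    intro m h
    cases m with
    | zero => simp [List.idxOf_cons_self]
    | succ m =>
      rw [List.getElem_cons_succ]
      by_cases hb : b = l[m]'(by simpa using h)
      · rw [← hb, List.idxOf_cons_self]; omega
      · rw [List.idxOf_cons_ne _ hb]
        have := ih m (by simpa using h)
        omega

lemma getElem_congr_idx' {α : Type*} {l : List α} {i j : ℕ} (h : i = j) (hi : i < l.length) :
    l[i]'hi = l[j]'(h ▸ hi) := by subst h; rfl

lemma exists_spaced_list {α : Type*} [DecidableEq α] [Fintype α] (d : ℕ) (hd : 1 ≤ d) :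
    ∀ (k : ℕ) (w : α → ℕ) (r : ℕ), r < d →
    (∀ a, w a ≤ k + 1) →
    ((Finset.univ.filter (fun a => w a = k + 1)).card ≤ r) →
    ((∑ a, w a) = k * d + r) →
    ∃ L : List α, L.length = k * d + r ∧ (∀ a, L.count a = w a) ∧
      (∀ (i j : ℕ) (hi : i < L.length) (hj : j < L.length), i < j →
        L[i]'hi = L[j]'hj → i + d ≤ j) := by
  intro k
  induction k with
  | zero =>
    intro w r hr hw hwr hsum
    refine ⟨(Finset.univ.filter (fun a => w a = 1)).toList, ?_, ?_, ?_⟩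
    · rw [Finset.length_toList]
      have h1 : ∑ a ∈ Finset.univ.filter (fun a => w a = 1), w a = ∑ a, w a :=
        Finset.sum_subset (Finset.subset_univ _) (by
          intro x _ hx
          simp only [Finset.mem_filter, Finset.mem_univ, true_and] at hx
          have := hw x; omega)
      have h2 : ∑ a ∈ Finset.univ.filter (fun a => w a = 1), w a
          = (Finset.univ.filter (fun a => w a = 1)).card := by
        rw [Finset.card_eq_sum_ones]
        refine Finset.sum_congr rfl ?_
        intro x hx
        simp only [Finset.mem_filter] at hx
        omega
      omega
    · intro a
      by_cases ha : a ∈ Finset.univ.filter (fun a => w a = 1)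
      · rw [List.count_eq_one_of_mem (Finset.nodup_toList _) (Finset.mem_toList.2 ha)]
        simp only [Finset.mem_filter] at ha
        omega
      · rw [List.count_eq_zero_of_not_mem (fun hc => ha (Finset.mem_toList.1 hc))]
        simp only [Finset.mem_filter, Finset.mem_univ, true_and] at ha
        have := hw a; omega
    · intro i j hi hj hij heq
      exact absurd (((Finset.nodup_toList _).getElem_inj_iff).1 heq) (by omega)
  | succ k ih =>
    intro w r hr hw hwr hsum
    classical
    set A : Finset α := Finset.univ.filter (fun a => w a = k + 1 + 1) with hA
    set B : Finset α := Finset.univ.filter (fun a => w a = k + 1) with hB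
    set supp : Finset α := Finset.univ.filter (fun a => w a ≠ 0) with hsupp
    have hmemA : ∀ a, a ∈ A ↔ w a = k + 1 + 1 := by
      intro a; simp [hA]
    have hmemB : ∀ a, a ∈ B ↔ w a = k + 1 := by
      intro a; simp [hB]
    have hmemsupp : ∀ a, a ∈ supp ↔ w a ≠ 0 := by
      intro a; simp [hsupp]
    have hA_supp : A ⊆ supp := by
      intro a ha; rw [hmemA] at ha; rw [hmemsupp]; omega
    have hB_supp : B ⊆ supp := by
      intro a ha; rw [hmemB] at ha; rw [hmemsupp]; omega
    have hAB_disj : Disjoint A B := by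
      rw [Finset.disjoint_left]
      intro a ha hb; rw [hmemA] at ha; rw [hmemB] at hb; omega
    have hp : A.card ≤ r := hwr
    have hsum_supp : ∑ a ∈ supp, w a = ∑ a, w a :=
      Finset.sum_subset (Finset.subset_univ _) (by
        intro x _ hx
        rw [hmemsupp] at hx
        omega)
    have hsupp_card : d ≤ supp.card := by
      have h1 : ∑ a ∈ supp, w a ≤ ∑ a ∈ supp, ((k+1) + if a ∈ A then 1 else 0) := by
        refine Finset.sum_le_sum ?_
        intro a ha
        by_cases haA : a ∈ A
        · have := (hmemA a).1 haA
          simp only [haA, if_true]; omega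
        · have : ¬ (w a = k + 1 + 1) := fun hc => haA ((hmemA a).2 hc)
          have := hw a
          simp only [haA, if_false]; omega
      rw [Finset.sum_add_distrib, Finset.sum_const, Finset.sum_ite_mem,
        Finset.inter_eq_right.2 hA_supp, Finset.sum_const] at h1
      simp only [smul_eq_mul, mul_one] at h1
      rw [hsum_supp, hsum] at h1
      have h2 : (k+1) * d ≤ (k+1) * supp.card := by
        have h3 : supp.card * (k+1) = (k+1) * supp.card := Nat.mul_comm _ _
        omega
      exact Nat.le_of_mul_le_mul_left h2 (by omega)
    have hDex : ∃ D : Finset α, A ⊆ D ∧ D ⊆ supp ∧ D.card = d ∧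
        A.card + (B \ D).card ≤ r := by
      by_cases hcase : d ≤ (A ∪ B).card
      · have hAsub : A ⊆ A ∪ B := Finset.subset_union_left
        obtain ⟨D, hAD, hDAB, hDcard⟩ :=
          Finset.exists_subsuperset_card_eq (n := d - A.card + A.card) hAsub (by omega)
            (by
              have := Finset.card_le_card hAsub
              omega)
        have hDcard' : D.card = d := by omega
        refine ⟨D, hAD, hDAB.trans (Finset.union_subset hA_supp hB_supp), hDcard', ?_⟩
        have hDsplitset : D = A ∪ (D ∩ B) := by
          ext x
          simp only [Finset.mem_union, Finset.mem_inter]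
          constructor
          · intro hx
            rcases Finset.mem_union.1 (hDAB hx) with h | h
            · exact Or.inl h
            · exact Or.inr ⟨hx, h⟩
          · rintro (h | ⟨h, _⟩)
            · exact hAD h
            · exact h
        have hdisj2 : Disjoint A (D ∩ B) :=
          hAB_disj.mono_right (Finset.inter_subset_right)
        have hDsplit : A.card + (D ∩ B).card = d := by
          rw [← Finset.card_union_of_disjoint hdisj2, ← hDsplitset, hDcard']
        have hBsplit : (B ∩ D).card + (B \ D).card = B.card :=
          Finset.card_inter_add_card_sdiff B D
        have hBD : (B ∩ D).card = (D ∩ B).card := by rw [Finset.inter_comm]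
        have hABsum : (k+2) * A.card + (k+1) * B.card ≤ (k+1)*d + r := by
          have h3 : ∑ a ∈ A ∪ B, w a = (k+2) * A.card + (k+1) * B.card := by
            rw [Finset.sum_union hAB_disj]
            congr 1
            · rw [Finset.sum_congr rfl (fun x hx => by
                rw [(hmemA x).1 hx]), Finset.sum_const, smul_eq_mul, Nat.mul_comm]
            · rw [Finset.sum_congr rfl (fun x hx => by
                rw [(hmemB x).1 hx]), Finset.sum_const, smul_eq_mul, Nat.mul_comm]
          rw [← h3, ← hsum]
          exact Finset.sum_le_sum_of_subset (Finset.subset_univ _)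
        set p := A.card
        set c := (D ∩ B).card
        set e := (B \ D).card
        set bb := B.card
        have c1 : (k+1)*(p + e) + (k+1)*c = (k+1)*p + (k+1)*bb := by
          have hceb : p + e + c = p + bb := by omega
          calc (k+1)*(p+e) + (k+1)*c = (k+1)*(p+e+c) := by ring
            _ = (k+1)*(p+bb) := by rw [hceb]
            _ = (k+1)*p + (k+1)*bb := by ring
        have c2 : (k+1)*c + (k+1)*p = (k+1)*d := by
          have hcp : c + p = d := by omega
          calc (k+1)*c + (k+1)*p = (k+1)*(c+p) := by ring
            _ = (k+1)*d := by rw [hcp]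
        have c3 : (k+1)*p + p + (k+1)*bb ≤ (k+1)*d + r := by
          have he : (k+1)*p + p + (k+1)*bb = (k+2)*p + (k+1)*bb := by ring
          omega
        have c4 : k*p ≤ k*r := Nat.mul_le_mul_left k hp
        have c6 : (k+1)*p = k*p + p := by ring
        have c7 : (k+1)*r = k*r + r := by ring
        have c5 : (k+1)*(p+e) ≤ (k+1)*r := by linarith
        exact Nat.le_of_mul_le_mul_left c5 (by omega)
      · push_neg at hcase
        have hABsub : A ∪ B ⊆ supp := Finset.union_subset hA_supp hB_supp
        obtain ⟨D, hABD, hDsupp, hDcard⟩ :=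
          Finset.exists_subsuperset_card_eq (n := d - (A ∪ B).card + (A ∪ B).card) hABsub
            (by omega) (by omega)
        have hDcard' : D.card = d := by omega
        have hBD : B \ D = ∅ := by
          rw [Finset.sdiff_eq_empty_iff_subset]
          exact (Finset.subset_union_right (s₁ := A) (s₂ := B)).trans hABD
        refine ⟨D, (Finset.subset_union_left (s₁ := A) (s₂ := B)).trans hABD, hDsupp, hDcard', ?_⟩
        rw [hBD]
        simpa using hp
    obtain ⟨D, hAD, hD_supp, hDcard, hbound⟩ := hDex
    have hD_pos : ∀ a ∈ D, 1 ≤ w a := by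
      intro a ha
      have := (hmemsupp a).1 (hD_supp ha)
      omega
    set w' : α → ℕ := fun a => if a ∈ D then w a - 1 else w a with hw'
    have hw'def : ∀ a, w' a = if a ∈ D then w a - 1 else w a := fun a => rfl
    have hw'1 : ∀ a, w' a ≤ k + 1 := by
      intro a
      rw [hw'def]
      by_cases haD : a ∈ D
      · rw [if_pos haD]; have := hw a; omega
      · rw [if_neg haD]
        have : ¬ (w a = k + 1 + 1) := fun hc => haD (hAD ((hmemA a).2 hc))
        have := hw a; omega
    have hw'r : (Finset.univ.filter (fun a => w' a = k + 1)).card ≤ r := by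
      refine le_trans (le_trans (Finset.card_le_card ?_) (Finset.card_union_le _ _)) hbound
      intro a ha
      have hv : w' a = k + 1 := (Finset.mem_filter.1 ha).2
      rw [hw'def] at hv
      by_cases haD : a ∈ D
      · rw [if_pos haD] at hv
        have := hD_pos a haD
        exact Finset.mem_union_left _ ((hmemA a).2 (by omega))
      · rw [if_neg haD] at hv
        exact Finset.mem_union_right _ (Finset.mem_sdiff.2 ⟨(hmemB a).2 hv, haD⟩)
    have hsum' : (∑ a, w' a) = k * d + r := by
      have hpt : ∀ a, w a = w' a + (if a ∈ D then 1 else 0) := by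
        intro a
        rw [hw'def]
        by_cases haD : a ∈ D
        · have := hD_pos a haD; rw [if_pos haD, if_pos haD]; omega
        · rw [if_neg haD, if_neg haD]; omega
      have h1 : ∑ a, w a = (∑ a, w' a) + D.card := by
        rw [Finset.sum_congr rfl (fun x _ => hpt x), Finset.sum_add_distrib]
        congr 1
        rw [Finset.sum_ite_mem]
        simp [Finset.univ_inter]
      have h2 : (k+1) * d = k * d + d := by ring
      omega
    obtain ⟨L', hlen', hcount', hspace'⟩ := ih w' r hr hw'1 hw'r hsum'
    set Dlist : List α := D.toList.mergeSort (fun a b => decide (L'.idxOf a ≤ L'.idxOf b)) with hDlist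
    have hperm : Dlist.Perm D.toList := List.mergeSort_perm _ _
    have hDnodup : Dlist.Nodup := hperm.nodup_iff.2 (Finset.nodup_toList D)
    have hDlen : Dlist.length = d := by
      rw [hperm.length_eq, Finset.length_toList, hDcard]
    have hmemDl : ∀ a, a ∈ Dlist ↔ a ∈ D := by
      intro a; rw [hperm.mem_iff, Finset.mem_toList]
    have hsorted : Dlist.Pairwise (fun a b => L'.idxOf a ≤ L'.idxOf b) := by
      have hms := List.pairwise_mergeSort (le := fun a b => decide (L'.idxOf a ≤ L'.idxOf b))
        (by intro a b c hab hbc; simp only [decide_eq_true_eq] at *; omega)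
        (by intro a b; simp only [Bool.or_eq_true, decide_eq_true_eq]; omega)
        D.toList
      refine List.Pairwise.imp ?_ hms
      intro a b h; simpa using h
    clear_value Dlist
    refine ⟨Dlist ++ L', ?_, ?_, ?_⟩
    · rw [List.length_append, hDlen, hlen']; ring
    · intro a
      rw [List.count_append, hcount', hw'def]
      by_cases haD : a ∈ D
      · rw [List.count_eq_one_of_mem hDnodup ((hmemDl a).2 haD), if_pos haD]
        have := hD_pos a haD
        omega
      · rw [List.count_eq_zero_of_not_mem (fun hc => haD ((hmemDl a).1 hc)), if_neg haD]
        omega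
    · intro i j hi hj hij heq
      have hitot : i < Dlist.length + L'.length := by
        simpa [List.length_append] using hi
      have hjtot : j < Dlist.length + L'.length := by
        simpa [List.length_append] using hj
      by_cases hjd : j < Dlist.length
      · rw [List.getElem_append_left (by omega), List.getElem_append_left hjd] at heq
        exact absurd (hDnodup.getElem_inj_iff.1 heq) (by omega)
      · push_neg at hjd
        by_cases hid : Dlist.length ≤ i
        · rw [List.getElem_append_right hid, List.getElem_append_right hjd] at heq
          have := hspace' (i - Dlist.length) (j - Dlist.length) (by omega) (by omega)
            (by omega) heq
          omega
        · push_neg at hid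
          rw [List.getElem_append_left hid, List.getElem_append_right hjd] at heq
          have hjlen : j - Dlist.length < L'.length := by omega
          have hkey_le : L'.idxOf (Dlist[i]'hid) ≤ j - Dlist.length := by
            rw [heq]
            exact indexOf_le_of_getElem' L' _ _
          have hmono : ∀ m (hm : m ≤ i), L'.idxOf (Dlist[m]'(by omega)) ≤ L'.idxOf (Dlist[i]'hid) := by
            intro m hm
            rcases Nat.lt_or_ge m i with h | h
            · exact List.pairwise_iff_getElem.1 hsorted m i (by omega) hid h
            · have hmi : m = i := by omega
              subst hmi; exact le_refl _
          have hlt_len : ∀ m (hm : m ≤ i), L'.idxOf (Dlist[m]'(by omega)) < L'.length := by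
            intro m hm
            exact lt_of_le_of_lt (le_trans (hmono m hm) hkey_le) hjlen
          have hclaim : ∀ m (hm : m ≤ i), m ≤ L'.idxOf (Dlist[m]'(by omega)) := by
            intro m
            induction m with
            | zero => intro _; exact Nat.zero_le _
            | succ m ihm =>
              intro hm
              have h1 := ihm (by omega)
              have h2 : L'.idxOf (Dlist[m]'(by omega)) ≤ L'.idxOf (Dlist[m+1]'(by omega)) :=
                List.pairwise_iff_getElem.1 hsorted m (m+1) (by omega) (by omega) (by omega)
              have hne : (Dlist[m]'(by omega)) ≠ (Dlist[m+1]'(by omega)) := by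
                intro hc
                exact absurd (hDnodup.getElem_inj_iff.1 hc) (by omega)
              have hmem1 : (Dlist[m]'(by omega)) ∈ L' :=
                List.idxOf_lt_length_iff.1 (hlt_len m (by omega))
              have hmem2 : (Dlist[m+1]'(by omega)) ∈ L' :=
                List.idxOf_lt_length_iff.1 (hlt_len (m+1) hm)
              have h3 : L'.idxOf (Dlist[m]'(by omega)) ≠ L'.idxOf (Dlist[m+1]'(by omega)) := by
                intro hc
                apply hne
                exact (List.idxOf_inj hmem1).1 hc
              omega
          have hfin := hclaim i (le_refl i)
          omega


/-- If `|S| = n = kd + r` with `0 ≤ r < d` and `M` is an edge set of a bipartite graph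
`(S,T)` in which every `s ∈ S` has degree at most `1`, every `t ∈ T` has degree at most
`k+1`, and at most `r` nodes of `T` have degree exactly `k+1`, then there is an ordering
of `S` under which `M` is a feasible `d`-distance matching. -/
theorem stmt11 {S T : Type*} [Fintype S] [DecidableEq S] [Fintype T] [DecidableEq T]
    (M : Finset (S × T)) (n d k r : ℕ) (hd : 1 ≤ d)
    (hn : Fintype.card S = n) (hnkr : n = k * d + r) (hr : r < d)
    (hS : ∀ s : S, (M.filter (fun e => e.1 = s)).card ≤ 1)
    (hT : ∀ t : T, (M.filter (fun e => e.2 = t)).card ≤ k + 1)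
    (hTr : (Finset.univ.filter
        (fun t : T => (M.filter (fun e => e.2 = t)).card = k + 1)).card ≤ r) :
    ∃ σ : S ≃ Fin n, ∀ e ∈ M, ∀ e' ∈ M, e.2 = e'.2 → e.1 ≠ e'.1 →
      (d : ℤ) ≤ |(((σ e.1 : Fin n) : ℕ) : ℤ) - (((σ e'.1 : Fin n) : ℕ) : ℤ)| := by
  classical
  set lbl : S → T ⊕ S := fun s =>
    if h : (M.filter (fun e => e.1 = s)).Nonempty then Sum.inl h.choose.2 else Sum.inr s
    with hlbl
  have hlbl_edge : ∀ s t, (s, t) ∈ M → lbl s = Sum.inl t := by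
    intro s t hst
    have hne : (M.filter (fun e => e.1 = s)).Nonempty :=
      ⟨(s, t), Finset.mem_filter.2 ⟨hst, rfl⟩⟩
    have heq : hne.choose = (s, t) :=
      Finset.card_le_one.1 (hS s) _ hne.choose_spec _ (Finset.mem_filter.2 ⟨hst, rfl⟩)
    show (if h : (M.filter (fun e => e.1 = s)).Nonempty then Sum.inl h.choose.2
      else Sum.inr s) = Sum.inl t
    rw [dif_pos hne, heq]
  have hlbl_inv : ∀ s t, lbl s = Sum.inl t → (s, t) ∈ M := by
    intro s t h
    have h' : (if hh : (M.filter (fun e => e.1 = s)).Nonempty then Sum.inl hh.choose.2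
        else (Sum.inr s : T ⊕ S)) = Sum.inl t := h
    by_cases hne : (M.filter (fun e => e.1 = s)).Nonempty
    · rw [dif_pos hne] at h'
      obtain ⟨hmM, hfst⟩ := Finset.mem_filter.1 hne.choose_spec
      have h2 : hne.choose.2 = t := Sum.inl.inj h'
      have h3 : (s, t) = hne.choose := by
        rw [Prod.ext_iff]; exact ⟨hfst.symm, h2.symm⟩
      rw [h3]; exact hmM
    · rw [dif_neg hne] at h'
      exact absurd h' (by simp)
  have hlbl_inr : ∀ s s', lbl s' = Sum.inr s → s' = s := by
    intro s s' h
    have h' : (if hh : (M.filter (fun e => e.1 = s')).Nonempty then Sum.inl hh.choose.2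
        else (Sum.inr s' : T ⊕ S)) = Sum.inr s := h
    by_cases hne : (M.filter (fun e => e.1 = s')).Nonempty
    · rw [dif_pos hne] at h'; exact absurd h' (by simp)
    · rw [dif_neg hne] at h'; exact Sum.inr.inj h'
  set w : (T ⊕ S) → ℕ := fun a => (Finset.univ.filter (fun s => lbl s = a)).card with hw
  have hsumw : ∑ a, w a = n := by
    rw [← hn, ← Finset.card_univ]
    exact (Finset.card_eq_sum_card_fiberwise (fun x _ => Finset.mem_univ (lbl x))).symm
  have hwdeg : ∀ t, w (Sum.inl t) ≤ (M.filter (fun e => e.2 = t)).card := by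
    intro t
    refine Finset.card_le_card_of_injOn (fun s => (s, t)) ?_ ?_
    · intro s hs
      rw [Finset.mem_coe, Finset.mem_filter] at hs
      exact Finset.mem_filter.2 ⟨hlbl_inv s t hs.2, rfl⟩
    · intro x _ y _ hxy
      simpa using congrArg Prod.fst hxy
  have hwinr : ∀ s, w (Sum.inr s) ≤ 1 := by
    intro s
    have hsub : Finset.univ.filter (fun s' => lbl s' = Sum.inr s) ⊆ {s} := by
      intro x hx
      rw [Finset.mem_filter] at hx
      simp [hlbl_inr s x hx.2]
    simpa using Finset.card_le_card hsub
  have hwb : ∀ a, w a ≤ k + 1 := by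
    rintro (t | s)
    · exact (hwdeg t).trans (hT t)
    · have := hwinr s; omega
  have hwr : (Finset.univ.filter (fun a => w a = k + 1)).card ≤ r := by
    rcases Nat.eq_zero_or_pos k with hk | hk
    · have h1 : (Finset.univ.filter (fun a => w a = k + 1)).card
          ≤ ∑ a, w a := by
        rw [Finset.card_eq_sum_ones]
        refine le_trans (Finset.sum_le_sum ?_) (Finset.sum_le_sum_of_subset (Finset.subset_univ _))
        intro a ha
        rw [Finset.mem_filter] at ha
        omega
      rw [hsumw, hnkr] at h1
      subst hk
      simpa using h1
    · refine le_trans (Finset.card_le_card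
        (t := (Finset.univ.filter
          (fun t : T => (M.filter (fun e => e.2 = t)).card = k + 1)).image
          (Sum.inl : T → T ⊕ S)) ?_)
        (le_trans Finset.card_image_le hTr)
      intro a ha
      rw [Finset.mem_filter] at ha
      match a with
      | Sum.inr s =>
        exfalso
        have := hwinr s
        omega
      | Sum.inl t =>
        have h1 := hwdeg t
        have h2 := hT t
        refine Finset.mem_image.2 ⟨t, Finset.mem_filter.2 ⟨Finset.mem_univ _, by omega⟩, rfl⟩
  obtain ⟨L, hlen, hcount, hspace⟩ :=
    exists_spaced_list d hd k w r hr hwb hwr (by rw [hsumw, hnkr])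
  have hLn : L.length = n := by rw [hlen, ← hnkr]
  subst hLn
  have hfib : ∀ a, Fintype.card {s : S // lbl s = a}
      = Fintype.card {i : Fin L.length // L.get i = a} := by
    intro a
    rw [Fintype.card_subtype, Fintype.card_subtype, count_eq_card_fiber]
    exact (hcount a).symm
  set σ0 : S ≃ Fin L.length :=
    Equiv.ofFiberEquiv (f := lbl) (g := fun i : Fin L.length => L.get i)
      (fun a => Fintype.equivOfCardEq (hfib a)) with hσ0def
  have hσ0 : ∀ s, L.get (σ0 s) = lbl s := fun s => Equiv.ofFiberEquiv_map _ s
  refine ⟨σ0, ?_⟩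
  intro e he e' he' ht hne2
  have h1 : lbl e.1 = Sum.inl e.2 := hlbl_edge e.1 e.2 (by rwa [Prod.mk.eta])
  have h2 : lbl e'.1 = Sum.inl e'.2 := hlbl_edge e'.1 e'.2 (by rwa [Prod.mk.eta])
  have hgets : L.get (σ0 e.1) = L.get (σ0 e'.1) := by
    rw [hσ0, hσ0, h1, h2, ht]
  have hij : (σ0 e.1 : ℕ) ≠ (σ0 e'.1 : ℕ) := by
    intro hc
    exact hne2 (σ0.injective (Fin.ext hc))
  rcases Nat.lt_or_ge (σ0 e.1 : ℕ) (σ0 e'.1 : ℕ) with h | h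
  · have hs := hspace (σ0 e.1 : ℕ) (σ0 e'.1 : ℕ) (σ0 e.1).isLt (σ0 e'.1).isLt h
      (by simpa [List.get_eq_getElem] using hgets)
    rw [abs_sub_comm, abs_of_nonneg (by omega)]
    omega
  · have h' : (σ0 e'.1 : ℕ) < (σ0 e.1 : ℕ) := by omega
    have hs := hspace (σ0 e'.1 : ℕ) (σ0 e.1 : ℕ) (σ0 e'.1).isLt (σ0 e.1).isLt h'
      (by simpa [List.get_eq_getElem] using hgets.symm)
    rw [abs_of_nonneg (by omega)]
    omega
end

section
/- Let n = kd + r with 0 ≤ r < d. Suppose M ⊆ E is a subset of edges of a bipartite graph G = (S,T;E) with |S| = n such that every node of S has degree at most 1 in M and every node of T has degree at most k in M. Then there exists a cyclic ordering s_1,…,s_n of S under which M is a feasible cyclic d-distance matching: for every t ∈ T and distinct edges s_i t, s_j t ∈ M, the cyclic distance between i and j (i.e., min(|i-j|, n - |i-j|)) is at least d. -/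
private lemma st12_ub (k D R n v u : ℕ) (hk : 0 < k) (hn : k * D + R = n) (hRk : R < k)
    (hv : v < k) (hm : k * u + v < n) : u ≤ D ∧ (u = D → v < R) := by
  have h2 : k * (D + 1) = k * D + k := by ring
  rcases le_or_gt u D with h | h
  · refine ⟨h, fun hE => ?_⟩
    subst hE
    omega
  · have h3 : k * (D + 1) ≤ k * u := Nat.mul_le_mul_left k h
    omega

private lemma st12_lt (k D R n v u : ℕ) (hk : 0 < k) (hn : k * D + R = n) (hRk : R < k)
    (hv : v < k) (hm : k * u + v < n) : v * D + min v R + u < n := by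
  obtain ⟨hu, huD⟩ := st12_ub k D R n v u hk hn hRk hv hm
  have hvD : (v + 1) * D ≤ k * D := Nat.mul_le_mul_right D hv
  have hexp : (v + 1) * D = v * D + D := by ring
  rcases lt_or_eq_of_le hu with h | h
  · omega
  · have hvR : v < R := huD h
    have hvD2 : (v + 2) * D ≤ k * D := Nat.mul_le_mul_right D (by omega)
    have hexp2 : (v + 2) * D = v * D + D + D := by ring
    subst h
    omega

private lemma st12_inj_lt (k D R n v u v' u' : ℕ) (hk : 0 < k) (hn : k * D + R = n) (hRk : R < k)
    (hv : v < k) (hv' : v' < k) (hm : k * u + v < n) (hlt : v < v') :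
    v * D + min v R + u < v' * D + min v' R + u' := by
  obtain ⟨hu, huD⟩ := st12_ub k D R n v u hk hn hRk hv hm
  have hstep : (v + 1) * D ≤ v' * D := Nat.mul_le_mul_right D hlt
  have hexp : (v + 1) * D = v * D + D := by ring
  rcases lt_or_eq_of_le hu with h | h
  · omega
  · have hvR : v < R := huD h
    subst h
    omega

private lemma st12_inj (k D R n v u v' u' : ℕ) (hk : 0 < k) (hn : k * D + R = n) (hRk : R < k)
    (hv : v < k) (hv' : v' < k) (hm : k * u + v < n) (hm' : k * u' + v' < n)
    (heq : v * D + min v R + u = v' * D + min v' R + u') : k * u + v = k * u' + v' := by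
  rcases lt_trichotomy v v' with h | h | h
  · exact absurd heq (Nat.ne_of_lt (st12_inj_lt k D R n v u v' u' hk hn hRk hv hv' hm h))
  · subst h
    have hu : u = u' := by omega
    rw [hu]
  · exact absurd heq.symm (Nat.ne_of_lt (st12_inj_lt k D R n v' u' v u hk hn hRk hv' hv hm' h))

private lemma st12_core (k D R d n ui uj vi vj : ℕ)
    (hd : 1 ≤ d) (hdD : d ≤ D) (hn : k * D + R = n) (hRk : R < k)
    (hvi : vi < k) (hvj : vj < k)
    (hij : k * ui + vi < k * uj + vj)
    (hji : k * uj + vj + 1 ≤ k * ui + vi + k)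
    (hdvd : k * uj + vj + 1 = k * ui + vi + k → vi = 0) :
    d + min (vi * D + min vi R + ui) (vj * D + min vj R + uj)
      ≤ max (vi * D + min vi R + ui) (vj * D + min vj R + uj) ∧
    max (vi * D + min vi R + ui) (vj * D + min vj R + uj) + d
      ≤ n + min (vi * D + min vi R + ui) (vj * D + min vj R + uj) := by
  have h1 : ui ≤ uj := by
    by_contra h
    push_neg at h
    have h2 : k * (uj + 1) ≤ k * ui := Nat.mul_le_mul_left k h
    have h3 : k * (uj + 1) = k * uj + k := by ring
    omega
  have h4 : uj ≤ ui + 1 := by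
    by_contra h
    push_neg at h
    have h5 : k * (ui + 2) ≤ k * uj := Nat.mul_le_mul_left k h
    have h6 : k * (ui + 2) = k * ui + k + k := by ring
    omega
  rcases (by omega : uj = ui ∨ uj = ui + 1) with h | h
  · subst h
    have hvv : vi < vj := by omega
    have ha : (vi + 1) * D ≤ vj * D := Nat.mul_le_mul_right D hvv
    have hb : (vj + 1) * D ≤ k * D := Nat.mul_le_mul_right D hvj
    have he1 : (vi + 1) * D = vi * D + D := by ring
    have he2 : (vj + 1) * D = vj * D + D := by ring
    omega
  · have hBA : k * uj = k * ui + k := by rw [h]; ring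
    have hvv : vj + 1 ≤ vi := by omega
    rcases (by omega : vj + 1 = vi ∨ vj + 2 ≤ vi) with hc | hc
    · exfalso
      have := hdvd (by omega)
      omega
    · have ha : (vj + 2) * D ≤ vi * D := Nat.mul_le_mul_right D hc
      have hb : (vi + 1) * D ≤ k * D := Nat.mul_le_mul_right D hvi
      have he1 : (vj + 2) * D = vj * D + D + D := by ring
      have he2 : (vi + 1) * D = vi * D + D := by ring
      omega

private lemma st12_unq (Bn a b x y : ℕ) (hx : x < Bn) (hy : y < Bn)
    (h : a * Bn + x = b * Bn + y) : a = b ∧ x = y := by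
  have h1 : (a * Bn + x) % Bn = x % Bn := by rw [Nat.mul_comm]; exact Nat.mul_add_mod Bn a x
  have h2 : (b * Bn + y) % Bn = y % Bn := by rw [Nat.mul_comm]; exact Nat.mul_add_mod Bn b y
  have hx' : x % Bn = x := Nat.mod_eq_of_lt hx
  have hy' : y % Bn = y := Nat.mod_eq_of_lt hy
  have hxy : x = y := by rw [← hx', ← h1, h, h2, hy']
  refine ⟨?_, hxy⟩
  have hBn : 0 < Bn := lt_of_le_of_lt (Nat.zero_le x) hx
  have h3 : a * Bn = b * Bn := by omega
  exact Nat.eq_of_mul_eq_mul_right hBn h3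

private theorem st12_aux {S T : Type*} [Fintype S] [DecidableEq S] [Fintype T] [DecidableEq T]
    (col : S → Option T) (n d k : ℕ) (hd : 1 ≤ d) (hk : 0 < k)
    (hn : Fintype.card S = n) (hkd : k * d ≤ n)
    (hfib : ∀ t : T, (Finset.univ.filter (fun s => col s = some t)).card ≤ k) :
    ∃ σ : S ≃ Fin n, ∀ s s' : S, s ≠ s' → ∀ t : T, col s = some t → col s' = some t →
      d + min ((σ s : Fin n) : ℕ) ((σ s' : Fin n) : ℕ)
          ≤ max ((σ s : Fin n) : ℕ) ((σ s' : Fin n) : ℕ) ∧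
      max ((σ s : Fin n) : ℕ) ((σ s' : Fin n) : ℕ) + d
          ≤ n + min ((σ s : Fin n) : ℕ) ((σ s' : Fin n) : ℕ) := by
  classical
  set D := n / k with hD
  set R := n % k with hR
  have hDR : k * D + R = n := Nat.div_add_mod n k
  have hRk : R < k := Nat.mod_lt n hk
  have hdD : d ≤ D := (Nat.le_div_iff_mul_le hk).mpr (by rw [Nat.mul_comm]; exact hkd)
  set cT := Fintype.card T with hcT
  set Bn := cT + n with hBn
  set eT : T → ℕ := fun t => ((Fintype.equivFin T) t : ℕ) with heT
  set eS : S → ℕ := fun s => ((Fintype.equivFin S) s : ℕ) with heS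
  set fibc : T → ℕ := fun t => (Finset.univ.filter (fun s => col s = some t)).card with hfibc
  set key : S → ℕ := fun s =>
    (col s).elim ((k - 1) * Bn + (cT + eS s)) (fun t => (k - fibc t) * Bn + eT t) with hkey
  have hkey_some : ∀ s t, col s = some t → key s = (k - fibc t) * Bn + eT t := by
    intro s t h
    simp only [hkey, h, Option.elim]
  have hkey_none : ∀ s, col s = none → key s = (k - 1) * Bn + (cT + eS s) := by
    intro s h
    simp only [hkey, h, Option.elim]
  have heT_lt : ∀ t, eT t < cT := by
    intro t
    simp only [heT, hcT]
    exact ((Fintype.equivFin T) t).isLt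
  have heS_lt : ∀ s, eS s < n := by
    intro s
    simp only [heS]
    rw [← hn]
    exact ((Fintype.equivFin S) s).isLt
  have hfibk : ∀ t, fibc t ≤ k := fun t => hfib t
  have hkey_col : ∀ s s', key s = key s' → col s = col s' := by
    intro s s' h
    rcases hcs : col s with _ | t <;> rcases hcs' : col s' with _ | t'
    · rfl
    · rw [hkey_none s hcs, hkey_some s' t' hcs'] at h
      have := (st12_unq Bn _ _ _ _ (by have := heS_lt s; omega) (by have := heT_lt t'; omega) h).2
      have := heT_lt t'
      omega
    · rw [hkey_some s t hcs, hkey_none s' hcs'] at h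
      have := (st12_unq Bn _ _ _ _ (by have := heT_lt t; omega) (by have := heS_lt s'; omega) h).2
      have := heT_lt t
      omega
    · rw [hkey_some s t hcs, hkey_some s' t' hcs'] at h
      have h2 := (st12_unq Bn _ _ _ _ (by have := heT_lt t; omega) (by have := heT_lt t'; omega) h).2
      have h3 : t = t' := by
        have : (Fintype.equivFin T) t = (Fintype.equivFin T) t' := by
          apply Fin.ext
          simpa [heT] using h2
        exact (Fintype.equivFin T).injective this
      rw [h3]
  have hkey_fib : ∀ s t, col s = some t →
      (Finset.univ.filter (fun y => key y = key s)) =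
      (Finset.univ.filter (fun y => col y = some t)) := by
    intro s t hst
    ext y
    simp only [Finset.mem_filter, Finset.mem_univ, true_and]
    constructor
    · intro h
      rw [hkey_col y s h, hst]
    · intro h
      rw [hkey_some y t h, hkey_some s t hst]
  have hkey_small : ∀ x, key x < cT → ∃ t', col x = some t' ∧ fibc t' = k := by
    intro x h
    rcases hcx : col x with _ | t'
    · rw [hkey_none x hcx] at h
      omega
    · refine ⟨t', rfl, ?_⟩
      rw [hkey_some x t' hcx] at h
      by_contra hne
      have h3 : 1 ≤ k - fibc t' := by have := hfibk t'; omega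
      have h4 : 1 * Bn ≤ (k - fibc t') * Bn := Nat.mul_le_mul_right Bn h3
      rw [one_mul] at h4
      omega
  -- sorting
  have e0 : S ≃ Fin n := Fintype.equivFinOfCardEq hn
  set f : Fin n → ℕ := fun m => key (e0.symm m) with hf
  set g : Fin n → ℕ := fun m => f (Tuple.sort f m) with hg
  have hgmono : Monotone g := fun a b hab => Tuple.monotone_sort f hab
  set σ0 : S ≃ Fin n := e0.trans (Tuple.sort f).symm with hσ0
  have hgσ : ∀ x : S, g (σ0 x) = key x := by
    intro x
    simp only [hσ0, hg, hf, Equiv.trans_apply, Equiv.apply_symm_apply, Equiv.symm_apply_apply]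
  have htrans : ∀ c : ℕ, (Finset.univ.filter (fun m : Fin n => g m = c)).card =
      (Finset.univ.filter (fun y : S => key y = c)).card := by
    intro c
    rw [← Fintype.card_subtype, ← Fintype.card_subtype]
    exact Fintype.card_congr (σ0.subtypeEquiv (fun y => by rw [hgσ y])).symm
  -- position map
  have hposlt : ∀ m : Fin n, (m : ℕ) % k * D + min ((m : ℕ) % k) R + (m : ℕ) / k < n := by
    intro m
    have hm : k * ((m : ℕ) / k) + (m : ℕ) % k < n := by
      rw [Nat.div_add_mod]
      exact m.isLt
    exact st12_lt k D R n _ _ hk hDR hRk (Nat.mod_lt _ hk) hm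
  set posF : Fin n → Fin n :=
    fun m => ⟨(m : ℕ) % k * D + min ((m : ℕ) % k) R + (m : ℕ) / k, hposlt m⟩ with hposF
  have hposinj : Function.Injective posF := by
    intro a b hab
    have h1 : (a : ℕ) % k * D + min ((a : ℕ) % k) R + (a : ℕ) / k
        = (b : ℕ) % k * D + min ((b : ℕ) % k) R + (b : ℕ) / k := by
      simpa [hposF] using congrArg Fin.val hab
    have hma : k * ((a : ℕ) / k) + (a : ℕ) % k < n := by rw [Nat.div_add_mod]; exact a.isLt
    have hmb : k * ((b : ℕ) / k) + (b : ℕ) % k < n := by rw [Nat.div_add_mod]; exact b.isLt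
    have h2 := st12_inj k D R n _ _ _ _ hk hDR hRk (Nat.mod_lt _ hk) (Nat.mod_lt _ hk) hma hmb h1
    rw [Nat.div_add_mod, Nat.div_add_mod] at h2
    exact Fin.ext h2
  set posE : Fin n ≃ Fin n := Equiv.ofBijective posF (Finite.injective_iff_bijective.mp hposinj)
    with hposE
  refine ⟨σ0.trans posE, ?_⟩
  have happ : ∀ x : S, (((σ0.trans posE) x : Fin n) : ℕ) = ((posF (σ0 x) : Fin n) : ℕ) := fun x => rfl
  intro s s' hne t hcs hcs'
  have main : ∀ a b : S, col a = some t → col b = some t → σ0 a < σ0 b →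
      d + min ((posF (σ0 a) : Fin n) : ℕ) ((posF (σ0 b) : Fin n) : ℕ)
          ≤ max ((posF (σ0 a) : Fin n) : ℕ) ((posF (σ0 b) : Fin n) : ℕ) ∧
      max ((posF (σ0 a) : Fin n) : ℕ) ((posF (σ0 b) : Fin n) : ℕ) + d
          ≤ n + min ((posF (σ0 a) : Fin n) : ℕ) ((posF (σ0 b) : Fin n) : ℕ) := by
    intro a b hca hcb hlt
    set i := σ0 a with hi
    set j := σ0 b with hj
    have hkeq : key a = key b := by rw [hkey_some a t hca, hkey_some b t hcb]
    have hgi : g i = key a := hgσ a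
    have hgj : g j = key a := by rw [hgσ b, hkeq]
    set L := Finset.univ.filter (fun m : Fin n => g m = g i) with hL
    have hIccL : Finset.Icc i j ⊆ L := by
      intro m hm
      rw [Finset.mem_Icc] at hm
      simp only [hL, Finset.mem_filter, Finset.mem_univ, true_and]
      have h1 : g m ≤ g j := hgmono hm.2
      have h2 : g i ≤ g m := hgmono hm.1
      omega
    have hcardL : L.card = fibc t := by
      rw [hL, htrans (g i), hgi, hkey_fib a t hca]
    have hIcc_card : (Finset.Icc i j).card = (j : ℕ) + 1 - (i : ℕ) := Fin.card_Icc i j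
    have hijn : (i : ℕ) < (j : ℕ) := hlt
    have hcard_le : (Finset.Icc i j).card ≤ L.card := Finset.card_le_card hIccL
    have hfk := hfibk t
    have hc1 : (j : ℕ) + 1 ≤ (i : ℕ) + k := by omega
    have hc2 : (j : ℕ) + 1 = (i : ℕ) + k → k ∣ (i : ℕ) := by
      intro hkk
      have hLk : L.card = k := by omega
      have hfck : fibc t = k := by omega
      have hLIcc : L = Finset.Icc i j := (Finset.eq_of_subset_of_card_le hIccL (by omega)).symm
      set B' := Finset.univ.filter (fun m : Fin n => g m < g i) with hB'
      have hB'eq : B' = Finset.univ.filter (fun m : Fin n => m < i) := by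
        ext m
        simp only [hB', Finset.mem_filter, Finset.mem_univ, true_and]
        constructor
        · intro h
          by_contra h2
          push_neg at h2
          have := hgmono h2
          omega
        · intro h
          have h1 : g m ≤ g i := hgmono h.le
          rcases lt_or_eq_of_le h1 with h2 | h2
          · exact h2
          · exfalso
            have hmL : m ∈ L := by
              simp only [hL, Finset.mem_filter, Finset.mem_univ, true_and]
              exact h2
            rw [hLIcc, Finset.mem_Icc] at hmL
            exact absurd hmL.1 (not_le.mpr h)
      have hB'card : B'.card = (i : ℕ) := by
        rw [hB'eq]
        have hIio : Finset.univ.filter (fun m : Fin n => m < i) = Finset.Iio i := by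
          ext m
          simp [Finset.mem_Iio]
        rw [hIio, Fin.card_Iio]
      have hsum := Finset.card_eq_sum_card_fiberwise
        (f := g) (s := B') (t := B'.image g) (fun x hx => Finset.mem_image_of_mem g hx)
      have hterm : ∀ c ∈ B'.image g, (B'.filter (fun m => g m = c)).card = k := by
        intro c hcmem
        obtain ⟨x, hxB, hxc⟩ := Finset.mem_image.mp hcmem
        have hxlt : g x < g i := by
          simpa only [hB', Finset.mem_filter, Finset.mem_univ, true_and] using hxB
        have hfull : B'.filter (fun m => g m = c) = Finset.univ.filter (fun m : Fin n => g m = c) := by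
          ext m
          simp only [hB', Finset.mem_filter, Finset.mem_univ, true_and]
          constructor
          · exact fun h => h.2
          · intro h
            exact ⟨by omega, h⟩
        rw [hfull, htrans c]
        set x0 := σ0.symm x with hx0
        have hkx0 : key x0 = c := by
          have h5 : g (σ0 x0) = key x0 := hgσ x0
          rw [hx0, Equiv.apply_symm_apply] at h5
          rw [← h5, hxc]
        have h7 : key a = eT t := by
          rw [hkey_some a t hca, hfck, Nat.sub_self, zero_mul, zero_add]
        have h8 : eT t < cT := heT_lt t
        have hsmall : key x0 < cT := by omega
        obtain ⟨t', hct', hfk'⟩ := hkey_small x0 hsmall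
        have h12 : (Finset.univ.filter (fun y : S => key y = c)) =
            (Finset.univ.filter (fun y : S => col y = some t')) := by
          rw [← hkx0]
          exact hkey_fib x0 t' hct'
        rw [h12]
        exact hfk'
      have hieq : (i : ℕ) = (B'.image g).card * k := by
        rw [← hB'card, hsum, Finset.sum_congr rfl hterm, Finset.sum_const, smul_eq_mul]
      exact ⟨(B'.image g).card, by rw [hieq, Nat.mul_comm]⟩
    -- arithmetic finish
    have hiv : k * ((i : ℕ) / k) + (i : ℕ) % k = (i : ℕ) := Nat.div_add_mod _ k
    have hjv : k * ((j : ℕ) / k) + (j : ℕ) % k = (j : ℕ) := Nat.div_add_mod _ k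
    have hdvd : k * ((j : ℕ) / k) + (j : ℕ) % k + 1 = k * ((i : ℕ) / k) + (i : ℕ) % k + k →
        (i : ℕ) % k = 0 := by
      intro h
      have h2 : (j : ℕ) + 1 = (i : ℕ) + k := by omega
      have h3 := hc2 h2
      omega
    have hcore := st12_core k D R d n ((i : ℕ) / k) ((j : ℕ) / k) ((i : ℕ) % k) ((j : ℕ) % k)
      hd hdD hDR hRk (Nat.mod_lt _ hk) (Nat.mod_lt _ hk) (by omega) (by omega) hdvd
    have hvi : ((posF i : Fin n) : ℕ) = (i : ℕ) % k * D + min ((i : ℕ) % k) R + (i : ℕ) / k := by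
      simp [hposF]
    have hvj : ((posF j : Fin n) : ℕ) = (j : ℕ) % k * D + min ((j : ℕ) % k) R + (j : ℕ) / k := by
      simp [hposF]
    rw [hvi, hvj]
    exact hcore
  rcases lt_or_gt_of_ne (fun h => hne (σ0.injective h)) with hlt | hlt
  · have := main s s' hcs hcs' hlt
    rw [happ s, happ s']
    exact this
  · have := main s' s hcs' hcs hlt
    rw [happ s, happ s']
    omega

/-- If `|S| = n = kd + r` with `0 ≤ r < d` and `M` is an edge set of a bipartite graph
`(S,T)` in which every `s ∈ S` has degree at most `1` and every `t ∈ T` has degree at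
most `k`, then there is a cyclic ordering of `S` under which `M` is a feasible cyclic
`d`-distance matching: the cyclic distance `min(|i-j|, n-|i-j|)` of the positions of
any two edges sharing a `T`-node is at least `d`. -/
theorem stmt12 {S T : Type*} [Fintype S] [DecidableEq S] [Fintype T] [DecidableEq T]
    (M : Finset (S × T)) (n d k r : ℕ) (hd : 1 ≤ d)
    (hn : Fintype.card S = n) (hnkr : n = k * d + r) (hr : r < d)
    (hS : ∀ s : S, (M.filter (fun e => e.1 = s)).card ≤ 1)
    (hT : ∀ t : T, (M.filter (fun e => e.2 = t)).card ≤ k) :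
    ∃ σ : S ≃ Fin n, ∀ e ∈ M, ∀ e' ∈ M, e.2 = e'.2 → e.1 ≠ e'.1 →
      (d : ℤ) ≤ min |(((σ e.1 : Fin n) : ℕ) : ℤ) - (((σ e'.1 : Fin n) : ℕ) : ℤ)|
        ((n : ℤ) - |(((σ e.1 : Fin n) : ℕ) : ℤ) - (((σ e'.1 : Fin n) : ℕ) : ℤ)|) := by
  classical
  rcases Nat.eq_zero_or_pos k with hk0 | hk
  · refine ⟨Fintype.equivFinOfCardEq hn, ?_⟩
    intro e he e' he' ht hne
    exfalso
    have h1 : e ∈ M.filter (fun x => x.2 = e.2) := Finset.mem_filter.mpr ⟨he, rfl⟩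
    have h2 : e' ∈ M.filter (fun x => x.2 = e.2) := Finset.mem_filter.mpr ⟨he', ht.symm⟩
    have h3 : e ≠ e' := fun h => hne (congrArg Prod.fst h)
    have h4 : 1 < (M.filter (fun x => x.2 = e.2)).card :=
      Finset.one_lt_card.mpr ⟨e, h1, e', h2, h3⟩
    have h5 := hT e.2
    omega
  · set col : S → Option T := fun s => if h : ∃ t, (s, t) ∈ M then some h.choose else none
      with hcol
    have hcolM' : ∀ s t, col s = some t → (s, t) ∈ M := by
      intro s t h
      rw [hcol] at h
      simp only at h
      split_ifs at h with hex
      · rw [Option.some.injEq] at h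
        rw [← h]
        exact hex.choose_spec
    have hcolM : ∀ e ∈ M, col e.1 = some e.2 := by
      intro e he
      have hex : ∃ t, (e.1, t) ∈ M := ⟨e.2, by rwa [Prod.mk.eta]⟩
      rw [hcol]
      simp only [dif_pos hex]
      have h1 : (e.1, hex.choose) ∈ M.filter (fun x => x.1 = e.1) :=
        Finset.mem_filter.mpr ⟨hex.choose_spec, rfl⟩
      have h2 : e ∈ M.filter (fun x => x.1 = e.1) := Finset.mem_filter.mpr ⟨he, rfl⟩
      have h3 := Finset.card_le_one.mp (hS e.1) _ h1 _ h2
      exact congrArg some (congrArg Prod.snd h3)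
    have hfib : ∀ t : T, (Finset.univ.filter (fun s => col s = some t)).card ≤ k := by
      intro t
      refine le_trans (Finset.card_le_card_of_injOn (fun s => (s, t)) ?_ ?_) (hT t)
      · intro s hs
        simp only [Finset.mem_coe, Finset.mem_filter, Finset.mem_univ, true_and] at hs
        exact Finset.mem_filter.mpr ⟨hcolM' s t hs, rfl⟩
      · intro a _ b _ hab
        exact congrArg Prod.fst hab
    obtain ⟨σ, H⟩ := st12_aux col n d k hd hk hn (by omega) hfib
    refine ⟨σ, ?_⟩
    intro e he e' he' ht hne
    have hc1 : col e.1 = some e.2 := hcolM e he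
    have hc2 : col e'.1 = some e.2 := by rw [ht]; exact hcolM e' he'
    obtain ⟨ha, hb⟩ := H e.1 e'.1 hne e.2 hc1 hc2
    rw [Int.abs_eq_natAbs]
    omega
end

section
/- Let H be a 2-regular 3-dimensional hypergraph on disjoint sets X, Y, Z (each element lies in exactly two hyperedges of ℋ ⊆ X×Y×Z, so |ℋ| = 2|Z|). In the bipartite graph G constructed from H (with S = ℋ_X ∪ Y ∪ ℋ_Z, T = X ∪ ℋ_Y ∪ Z, edges e^(X)e^(Y), e^(Y)e^(Z) for each e ∈ ℋ, and edges between each u ∈ X∪Y∪Z and its two incident hyperedge copies), with S_1 = ℋ_X ∪ Y, S_2 = Y ∪ ℋ_Z: the maximum size of a double matching in G equals ν(H) + 4|Z|, where ν(H) is the maximum size of a 3-dimensional matching in H. -/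
section DoubleMatchingConstruction

variable {X Y Z : Type*} [DecidableEq X] [DecidableEq Y] [DecidableEq Z]
variable (ℋ : Finset (X × Y × Z))

/-- Adjacency of the bipartite graph `G` built from the hypergraph `ℋ`:
`S = ℋ_X ⊕ Y ⊕ ℋ_Z`, `T = X ⊕ ℋ_Y ⊕ Z`; each hyperedge `e` contributes the edges
`e⁽ˣ⁾e⁽ʸ⁾`, `e⁽ʸ⁾e⁽ᶻ⁾`, and each `u ∈ X ∪ Y ∪ Z` is joined to the copies of the
hyperedges incident to it. -/
def adjConstr :
    ({e : X × Y × Z // e ∈ ℋ} ⊕ Y ⊕ {e : X × Y × Z // e ∈ ℋ}) →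
    (X ⊕ {e : X × Y × Z // e ∈ ℋ} ⊕ Z) → Prop
  | Sum.inl e, Sum.inl x => x = e.val.1
  | Sum.inl e, Sum.inr (Sum.inl f) => e = f
  | Sum.inr (Sum.inl y), Sum.inr (Sum.inl f) => f.val.2.1 = y
  | Sum.inr (Sum.inr e), Sum.inr (Sum.inl f) => e = f
  | Sum.inr (Sum.inr e), Sum.inr (Sum.inr z) => z = e.val.2.2
  | _, _ => False

/-- Membership in `S₁ = ℋ_X ∪ Y`. -/
def inS1 : ({e : X × Y × Z // e ∈ ℋ} ⊕ Y ⊕ {e : X × Y × Z // e ∈ ℋ}) → Prop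
  | Sum.inl _ => True
  | Sum.inr (Sum.inl _) => True
  | Sum.inr (Sum.inr _) => False

/-- Membership in `S₂ = Y ∪ ℋ_Z`. -/
def inS2 : ({e : X × Y × Z // e ∈ ℋ} ⊕ Y ⊕ {e : X × Y × Z // e ∈ ℋ}) → Prop
  | Sum.inl _ => False
  | Sum.inr _ => True

/-- `M` is a double matching in the constructed graph: it uses only edges of `G`, and
both its restriction to edges with `S`-endpoint in `S₁` and its restriction to edges
with `S`-endpoint in `S₂` are matchings. -/
def IsDoubleMatching
    (M : Finset (({e : X × Y × Z // e ∈ ℋ} ⊕ Y ⊕ {e : X × Y × Z // e ∈ ℋ}) ×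
      (X ⊕ {e : X × Y × Z // e ∈ ℋ} ⊕ Z))) : Prop :=
  (∀ p ∈ M, adjConstr ℋ p.1 p.2) ∧
  (∀ p ∈ M, ∀ q ∈ M, p ≠ q → inS1 ℋ p.1 → inS1 ℋ q.1 → p.1 ≠ q.1 ∧ p.2 ≠ q.2) ∧
  (∀ p ∈ M, ∀ q ∈ M, p ≠ q → inS2 ℋ p.1 → inS2 ℋ q.1 → p.1 ≠ q.1 ∧ p.2 ≠ q.2)

end DoubleMatchingConstruction

section Aux

variable {X Y Z : Type*} [DecidableEq X] [DecidableEq Y] [DecidableEq Z]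
variable (ℋ : Finset (X × Y × Z))

abbrev EdgeT (ℋ : Finset (X × Y × Z)) :=
  ({e : X × Y × Z // e ∈ ℋ} ⊕ Y ⊕ {e : X × Y × Z // e ∈ ℋ}) ×
    (X ⊕ {e : X × Y × Z // e ∈ ℋ} ⊕ Z)

def eA (e : {e : X × Y × Z // e ∈ ℋ}) : EdgeT ℋ := (Sum.inl e, Sum.inl e.val.1)
def eB (e : {e : X × Y × Z // e ∈ ℋ}) : EdgeT ℋ :=
  (Sum.inr (Sum.inr e), Sum.inr (Sum.inr e.val.2.2))
def eC (e : {e : X × Y × Z // e ∈ ℋ}) : EdgeT ℋ :=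
  (Sum.inr (Sum.inl e.val.2.1), Sum.inr (Sum.inl e))
def eD (e : {e : X × Y × Z // e ∈ ℋ}) : EdgeT ℋ := (Sum.inl e, Sum.inr (Sum.inl e))
def eE (e : {e : X × Y × Z // e ∈ ℋ}) : EdgeT ℋ :=
  (Sum.inr (Sum.inr e), Sum.inr (Sum.inl e))

def chrg : EdgeT ℋ → Option {e : X × Y × Z // e ∈ ℋ}
  | (Sum.inl e, _) => some e
  | (Sum.inr (Sum.inr e), _) => some e
  | (Sum.inr (Sum.inl _), Sum.inr (Sum.inl f)) => some f
  | _ => none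


omit [DecidableEq X] [DecidableEq Y] [DecidableEq Z] in
lemma chrg_edges (e : {e : X × Y × Z // e ∈ ℋ}) (p : EdgeT ℋ)
    (hp : p = eA ℋ e ∨ p = eB ℋ e ∨ p = eC ℋ e ∨ p = eD ℋ e ∨ p = eE ℋ e) :
    chrg ℋ p = some e := by
  rcases hp with rfl | rfl | rfl | rfl | rfl <;> rfl

lemma exists_dm (F : Finset (X × Y × Z)) (hFH : F ⊆ ℋ)
    (hF : ∀ e ∈ F, ∀ f ∈ F, e ≠ f → e.1 ≠ f.1 ∧ e.2.1 ≠ f.2.1 ∧ e.2.2 ≠ f.2.2) :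
    ∃ M, IsDoubleMatching ℋ M ∧ M.card = F.card + 2 * ℋ.card := by
  classical
  set M : Finset (EdgeT ℋ) := ℋ.attach.biUnion (fun e =>
    if e.val ∈ F then {eA ℋ e, eB ℋ e, eC ℋ e} else {eD ℋ e, eE ℋ e}) with hMdef
  have hmem : ∀ p : EdgeT ℋ, p ∈ M ↔ ∃ e : {e : X × Y × Z // e ∈ ℋ},
      (e.val ∈ F ∧ (p = eA ℋ e ∨ p = eB ℋ e ∨ p = eC ℋ e)) ∨
      (e.val ∉ F ∧ (p = eD ℋ e ∨ p = eE ℋ e)) := by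
    intro p
    simp only [hMdef, Finset.mem_biUnion, Finset.mem_attach, true_and]
    constructor
    · rintro ⟨e, he⟩
      by_cases h : e.val ∈ F
      · simp only [h, if_true, Finset.mem_insert, Finset.mem_singleton] at he
        exact ⟨e, Or.inl ⟨h, he⟩⟩
      · simp only [h, if_false, Finset.mem_insert, Finset.mem_singleton] at he
        exact ⟨e, Or.inr ⟨h, he⟩⟩
    · rintro ⟨e, ⟨h, hp⟩ | ⟨h, hp⟩⟩ <;> refine ⟨e, ?_⟩ <;>
        simp only [h, if_true, if_false, Finset.mem_insert, Finset.mem_singleton] <;>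
        exact hp
  refine ⟨M, ⟨?_, ?_, ?_⟩, ?_⟩
  · intro p hp
    rw [hmem] at hp
    obtain ⟨e, ⟨_, (rfl | rfl | rfl)⟩ | ⟨_, (rfl | rfl)⟩⟩ := hp <;>
      simp [eA, eB, eC, eD, eE, adjConstr]
  · intro p hp q hq hpq h1p h1q
    rw [hmem] at hp hq
    obtain ⟨e, hp⟩ := hp
    obtain ⟨f, hq⟩ := hq
    rcases hp with ⟨heF, (rfl | rfl | rfl)⟩ | ⟨heF, (rfl | rfl)⟩ <;>
    rcases hq with ⟨hfF, (rfl | rfl | rfl)⟩ | ⟨hfF, (rfl | rfl)⟩ <;>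
      first
        | exact False.elim h1p
        | exact False.elim h1q
        | (refine ⟨fun hc => ?_, fun hc => ?_⟩ <;>
            simp [eA, eB, eC, eD, eE] at hc <;>
            first
              | exact hpq (congrArg _ hc)
              | exact hfF (hc ▸ heF)
              | exact heF (hc ▸ hfF)
              | exact (hF _ heF _ hfF fun hv => hpq (congrArg _ (Subtype.ext hv))).1 hc
              | exact (hF _ heF _ hfF fun hv => hpq (congrArg _ (Subtype.ext hv))).2.1 hc
              | exact (hF _ heF _ hfF fun hv => hpq (congrArg _ (Subtype.ext hv))).2.2 hc)
  · intro p hp q hq hpq h1p h1q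
    rw [hmem] at hp hq
    obtain ⟨e, hp⟩ := hp
    obtain ⟨f, hq⟩ := hq
    rcases hp with ⟨heF, (rfl | rfl | rfl)⟩ | ⟨heF, (rfl | rfl)⟩ <;>
    rcases hq with ⟨hfF, (rfl | rfl | rfl)⟩ | ⟨hfF, (rfl | rfl)⟩ <;>
      first
        | exact False.elim h1p
        | exact False.elim h1q
        | (refine ⟨fun hc => ?_, fun hc => ?_⟩ <;>
            simp [eA, eB, eC, eD, eE] at hc <;>
            first
              | exact hpq (congrArg _ hc)
              | exact hfF (hc ▸ heF)
              | exact heF (hc ▸ hfF)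
              | exact (hF _ heF _ hfF fun hv => hpq (congrArg _ (Subtype.ext hv))).1 hc
              | exact (hF _ heF _ hfF fun hv => hpq (congrArg _ (Subtype.ext hv))).2.1 hc
              | exact (hF _ heF _ hfF fun hv => hpq (congrArg _ (Subtype.ext hv))).2.2 hc)
  · have hdisj : ∀ e ∈ ℋ.attach, ∀ f ∈ ℋ.attach, e ≠ f →
        Disjoint (if e.val ∈ F then ({eA ℋ e, eB ℋ e, eC ℋ e} : Finset (EdgeT ℋ))
            else {eD ℋ e, eE ℋ e})
          (if f.val ∈ F then ({eA ℋ f, eB ℋ f, eC ℋ f} : Finset (EdgeT ℋ))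
            else {eD ℋ f, eE ℋ f}) := by
      intro e _ f _ hef
      rw [Finset.disjoint_left]
      intro p hpe hpf
      have key : ∀ (g : {e : X × Y × Z // e ∈ ℋ}) (q : EdgeT ℋ),
          q ∈ (if g.val ∈ F then ({eA ℋ g, eB ℋ g, eC ℋ g} : Finset (EdgeT ℋ))
            else {eD ℋ g, eE ℋ g}) → chrg ℋ q = some g := by
        intro g q hq
        apply chrg_edges
        split_ifs at hq <;>
          simp only [Finset.mem_insert, Finset.mem_singleton] at hq <;> tauto
      have h1 := key e p hpe
      have h2 := key f p hpf
      rw [h1] at h2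
      exact hef (Option.some_injective _ h2)
    rw [hMdef, Finset.card_biUnion hdisj]
    have hone : ∀ e ∈ ℋ.attach,
        (if e.val ∈ F then ({eA ℋ e, eB ℋ e, eC ℋ e} : Finset (EdgeT ℋ))
          else {eD ℋ e, eE ℋ e}).card = 2 + (if e.val ∈ F then 1 else 0) := by
      intro e _
      split_ifs with h
      · rw [Finset.card_insert_of_notMem (by simp [eA, eB, eC, Prod.ext_iff]),
          Finset.card_insert_of_notMem (by simp [eB, eC, Prod.ext_iff]),
          Finset.card_singleton]
      · rw [Finset.card_insert_of_notMem (by simp [eD, eE, Prod.ext_iff]),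
          Finset.card_singleton]
    rw [Finset.sum_congr rfl hone, Finset.sum_add_distrib, Finset.sum_const,
      Finset.card_attach, smul_eq_mul]
    have h1 : (∑ e ∈ ℋ.attach, if e.val ∈ F then 1 else 0)
        = (ℋ.attach.filter (fun e => e.val ∈ F)).card := by
      simp [Finset.sum_boole]
    have h2 : (ℋ.attach.filter (fun e => e.val ∈ F)).card = F.card := by
      apply Finset.card_bij (fun e _ => e.val)
      · intro a ha; exact (Finset.mem_filter.mp ha).2
      · intro a _ b _ h; exact Subtype.ext h
      · intro b hb; exact ⟨⟨b, hFH hb⟩, Finset.mem_filter.mpr ⟨Finset.mem_attach _ _, hb⟩, rfl⟩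
    rw [h1, h2]
    omega

lemma card3' {α : Type*} [DecidableEq α] (a b c : α) : ({a, b, c} : Finset α).card ≤ 3 := by
  have h1 := Finset.card_insert_le a ({b, c} : Finset α)
  have h2 := Finset.card_insert_le b ({c} : Finset α)
  have h3 := Finset.card_singleton c
  omega

lemma card2' {α : Type*} [DecidableEq α] (a b : α) : ({a, b} : Finset α).card ≤ 2 := by
  have h1 := Finset.card_insert_le a ({b} : Finset α)
  have h3 := Finset.card_singleton b
  omega

lemma dm_le (M : Finset (EdgeT ℋ)) (hM : IsDoubleMatching ℋ M) :
    ∃ F ⊆ ℋ, (∀ e ∈ F, ∀ f ∈ F, e ≠ f →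
      e.1 ≠ f.1 ∧ e.2.1 ≠ f.2.1 ∧ e.2.2 ≠ f.2.2) ∧ M.card ≤ F.card + 2 * ℋ.card := by
  classical
  obtain ⟨hadj, hS1, hS2⟩ := hM
  have hAD : ∀ e, eA ℋ e ∈ M → eD ℋ e ∈ M → False := by
    intro e hA hD
    exact (hS1 _ hA _ hD (by simp [eA, eD, Prod.ext_iff]) trivial trivial).1 rfl
  have hCD : ∀ e, eC ℋ e ∈ M → eD ℋ e ∈ M → False := by
    intro e hC hD
    exact (hS1 _ hC _ hD (by simp [eC, eD, Prod.ext_iff]) trivial trivial).2 rfl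
  have hBE : ∀ e, eB ℋ e ∈ M → eE ℋ e ∈ M → False := by
    intro e hB hE
    exact (hS2 _ hB _ hE (by simp [eB, eE, Prod.ext_iff]) trivial trivial).1 rfl
  have hCE : ∀ e, eC ℋ e ∈ M → eE ℋ e ∈ M → False := by
    intro e hC hE
    exact (hS2 _ hC _ hE (by simp [eC, eE, Prod.ext_iff]) trivial trivial).2 rfl
  set P : {e : X × Y × Z // e ∈ ℋ} → Prop :=
    fun e => eA ℋ e ∈ M ∧ eB ℋ e ∈ M ∧ eC ℋ e ∈ M with hPdef
  refine ⟨(ℋ.attach.filter P).image Subtype.val, ?_, ?_, ?_⟩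
  · intro a ha
    obtain ⟨e, _, rfl⟩ := Finset.mem_image.mp ha
    exact e.property
  · intro a ha b hb hab
    obtain ⟨ea, hea, rfl⟩ := Finset.mem_image.mp ha
    obtain ⟨eb, heb, rfl⟩ := Finset.mem_image.mp hb
    obtain ⟨hAa, hBa, hCa⟩ : P ea := (Finset.mem_filter.mp hea).2
    obtain ⟨hAb, hBb, hCb⟩ : P eb := (Finset.mem_filter.mp heb).2
    have heab : ea ≠ eb := fun h => hab (congrArg _ h)
    refine ⟨?_, ?_, ?_⟩
    · exact fun h => (hS1 _ hAa _ hAb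
        (fun hh => heab (Sum.inl.inj (congrArg Prod.fst hh))) trivial trivial).2
        (congrArg Sum.inl h)
    · exact fun h => (hS1 _ hCa _ hCb
        (fun hh => heab (Sum.inl.inj (Sum.inr.inj (congrArg Prod.snd hh)))) trivial trivial).1
        (congrArg (fun y => Sum.inr (Sum.inl y)) h)
    · exact fun h => (hS2 _ hBa _ hBb
        (fun hh => heab (Sum.inr.inj (Sum.inr.inj (congrArg Prod.fst hh)))) trivial trivial).2
        (congrArg (fun z => Sum.inr (Sum.inr z)) h)
  · have hFcard : ((ℋ.attach.filter P).image Subtype.val).card = (ℋ.attach.filter P).card :=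
      Finset.card_image_of_injective _ Subtype.val_injective
    have hfib : M.card = ∑ o ∈ ℋ.attach.image some,
        (M.filter (fun p => chrg ℋ p = o)).card := by
      apply Finset.card_eq_sum_card_fiberwise
      rintro ⟨s, t⟩ hp
      rcases s with g | y | g
      · exact Finset.mem_image.mpr ⟨g, Finset.mem_attach _ _, rfl⟩
      · rcases t with x | f | z
        · exact absurd (hadj _ hp) (by simp [adjConstr])
        · exact Finset.mem_image.mpr ⟨f, Finset.mem_attach _ _, rfl⟩
        · exact absurd (hadj _ hp) (by simp [adjConstr])
      · exact Finset.mem_image.mpr ⟨g, Finset.mem_attach _ _, rfl⟩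
    rw [Finset.sum_image (fun _ _ _ _ h => Option.some_injective _ h)] at hfib
    have hbound : ∀ e ∈ ℋ.attach,
        (M.filter (fun p => chrg ℋ p = some e)).card ≤ 2 + (if P e then 1 else 0) := by
      intro e _
      have hsub : ∀ p ∈ M.filter (fun p => chrg ℋ p = some e),
          p = eA ℋ e ∨ p = eD ℋ e ∨ p = eC ℋ e ∨ p = eE ℋ e ∨ p = eB ℋ e := by
        rintro ⟨s, t⟩ hp
        obtain ⟨hpM, hch⟩ := Finset.mem_filter.mp hp
        have hai := hadj _ hpM
        rcases s with g | y | g <;> rcases t with x | f | z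
        · obtain rfl : e = g := (Option.some_injective _ hch).symm
          obtain rfl : x = e.val.1 := hai
          exact Or.inl rfl
        · obtain rfl : e = g := (Option.some_injective _ hch).symm
          obtain rfl : e = f := hai
          exact Or.inr (Or.inl rfl)
        · exact False.elim hai
        · simp [chrg] at hch
        · obtain rfl : e = f := (Option.some_injective _ hch).symm
          obtain rfl : e.val.2.1 = y := hai
          exact Or.inr (Or.inr (Or.inl rfl))
        · simp [chrg] at hch
        · exact False.elim hai
        · obtain rfl : e = g := (Option.some_injective _ hch).symm
          obtain rfl : e = f := hai
          exact Or.inr (Or.inr (Or.inr (Or.inl rfl)))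
        · obtain rfl : e = g := (Option.some_injective _ hch).symm
          obtain rfl : z = e.val.2.2 := hai
          exact Or.inr (Or.inr (Or.inr (Or.inr rfl)))
      have hmemM : ∀ p ∈ M.filter (fun p => chrg ℋ p = some e), p ∈ M :=
        fun p hp => (Finset.mem_filter.mp hp).1
      by_cases hC : eC ℋ e ∈ M
      · have hD : eD ℋ e ∉ M := fun h => hCD e hC h
        have hE : eE ℋ e ∉ M := fun h => hCE e hC h
        by_cases hP : P e
        · have hss : M.filter (fun p => chrg ℋ p = some e) ⊆ {eA ℋ e, eC ℋ e, eB ℋ e} := by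
            intro p hp
            rcases hsub p hp with rfl | rfl | rfl | rfl | rfl
            · simp
            · exact absurd (hmemM _ hp) hD
            · simp
            · exact absurd (hmemM _ hp) hE
            · simp
          rw [if_pos hP]
          exact le_trans (Finset.card_le_card hss) (card3' _ _ _)
        · have hor : eA ℋ e ∉ M ∨ eB ℋ e ∉ M := by
            by_contra h
            push_neg at h
            exact hP ⟨h.1, h.2, hC⟩
          rw [if_neg hP, add_zero]
          rcases hor with hA | hB
          · have hss : M.filter (fun p => chrg ℋ p = some e) ⊆ {eC ℋ e, eB ℋ e} := by
              intro p hp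
              rcases hsub p hp with rfl | rfl | rfl | rfl | rfl
              · exact absurd (hmemM _ hp) hA
              · exact absurd (hmemM _ hp) hD
              · simp
              · exact absurd (hmemM _ hp) hE
              · simp
            exact le_trans (Finset.card_le_card hss) (card2' _ _)
          · have hss : M.filter (fun p => chrg ℋ p = some e) ⊆ {eA ℋ e, eC ℋ e} := by
              intro p hp
              rcases hsub p hp with rfl | rfl | rfl | rfl | rfl
              · simp
              · exact absurd (hmemM _ hp) hD
              · simp
              · exact absurd (hmemM _ hp) hE
              · exact absurd (hmemM _ hp) hB
            exact le_trans (Finset.card_le_card hss) (card2' _ _)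
      · have hb2 : (M.filter (fun p => chrg ℋ p = some e)).card ≤ 2 := by
          by_cases hA : eA ℋ e ∈ M
          · have hD : eD ℋ e ∉ M := fun h => hAD e hA h
            by_cases hE : eE ℋ e ∈ M
            · have hB : eB ℋ e ∉ M := fun h => hBE e h hE
              have hss : M.filter (fun p => chrg ℋ p = some e) ⊆ {eA ℋ e, eE ℋ e} := by
                intro p hp
                rcases hsub p hp with rfl | rfl | rfl | rfl | rfl
                · simp
                · exact absurd (hmemM _ hp) hD
                · exact absurd (hmemM _ hp) hC
                · simp
                · exact absurd (hmemM _ hp) hB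
              exact le_trans (Finset.card_le_card hss) (card2' _ _)
            · have hss : M.filter (fun p => chrg ℋ p = some e) ⊆ {eA ℋ e, eB ℋ e} := by
                intro p hp
                rcases hsub p hp with rfl | rfl | rfl | rfl | rfl
                · simp
                · exact absurd (hmemM _ hp) hD
                · exact absurd (hmemM _ hp) hC
                · exact absurd (hmemM _ hp) hE
                · simp
              exact le_trans (Finset.card_le_card hss) (card2' _ _)
          · by_cases hE : eE ℋ e ∈ M
            · have hB : eB ℋ e ∉ M := fun h => hBE e h hE
              have hss : M.filter (fun p => chrg ℋ p = some e) ⊆ {eD ℋ e, eE ℋ e} := by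
                intro p hp
                rcases hsub p hp with rfl | rfl | rfl | rfl | rfl
                · exact absurd (hmemM _ hp) hA
                · simp
                · exact absurd (hmemM _ hp) hC
                · simp
                · exact absurd (hmemM _ hp) hB
              exact le_trans (Finset.card_le_card hss) (card2' _ _)
            · have hss : M.filter (fun p => chrg ℋ p = some e) ⊆ {eD ℋ e, eB ℋ e} := by
                intro p hp
                rcases hsub p hp with rfl | rfl | rfl | rfl | rfl
                · exact absurd (hmemM _ hp) hA
                · simp
                · exact absurd (hmemM _ hp) hC
                · exact absurd (hmemM _ hp) hE
                · simp
              exact le_trans (Finset.card_le_card hss) (card2' _ _)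
        omega
    have hsum : (∑ e ∈ ℋ.attach, (M.filter (fun p => chrg ℋ p = some e)).card)
        ≤ ∑ e ∈ ℋ.attach, (2 + (if P e then 1 else 0)) :=
      Finset.sum_le_sum hbound
    have hsum2 : (∑ e ∈ ℋ.attach, (2 + (if P e then 1 else 0)))
        = 2 * ℋ.card + (ℋ.attach.filter P).card := by
      rw [Finset.sum_add_distrib, Finset.sum_const, Finset.card_attach, smul_eq_mul]
      have : (∑ e ∈ ℋ.attach, if P e then 1 else 0) = (ℋ.attach.filter P).card := by
        convert (Finset.card_filter P _).symm
      omega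
    rw [hFcard]
    omega
end Aux

/-- For a 2-regular 3-dimensional hypergraph `ℋ ⊆ X × Y × Z`, the maximum size of a
double matching in the constructed bipartite graph equals `ν(ℋ) + 4|Z|`, where
`ν(ℋ)` is the maximum size of a 3-dimensional matching in `ℋ`. -/
theorem stmt17 {X Y Z : Type*} [Fintype X] [Fintype Y] [Fintype Z]
    [DecidableEq X] [DecidableEq Y] [DecidableEq Z]
    (ℋ : Finset (X × Y × Z))
    (h2X : ∀ x : X, (ℋ.filter (fun e => e.1 = x)).card = 2)
    (h2Y : ∀ y : Y, (ℋ.filter (fun e => e.2.1 = y)).card = 2)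
    (h2Z : ∀ z : Z, (ℋ.filter (fun e => e.2.2 = z)).card = 2)
    (ν : ℕ)
    (hν : IsGreatest {m : ℕ | ∃ F ⊆ ℋ,
      (∀ e ∈ F, ∀ f ∈ F, e ≠ f →
        e.1 ≠ f.1 ∧ e.2.1 ≠ f.2.1 ∧ e.2.2 ≠ f.2.2) ∧ F.card = m} ν) :
    IsGreatest {m : ℕ | ∃ M, IsDoubleMatching ℋ M ∧ M.card = m}
      (ν + 4 * Fintype.card Z) := by
  classical
  have hHcard : ℋ.card = 2 * Fintype.card Z := by
    rw [Finset.card_eq_sum_card_fiberwise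
      (f := fun e => e.2.2) (t := (Finset.univ : Finset Z)) (fun e _ => Finset.mem_univ _)]
    simp only [h2Z, Finset.sum_const, Finset.card_univ, smul_eq_mul]
    ring
  constructor
  · obtain ⟨F, hFH, hF, hFcard⟩ := hν.1
    obtain ⟨M, hDM, hMcard⟩ := exists_dm ℋ F hFH hF
    refine ⟨M, hDM, ?_⟩
    rw [hMcard, hFcard, hHcard]
    ring
  · intro m hm
    obtain ⟨M, hDM, rfl⟩ := hm
    obtain ⟨F, hFH, hF, hle⟩ := dm_le ℋ M hDM
    have hFν : F.card ≤ ν := hν.2 ⟨F, hFH, hF, rfl⟩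
    omega
end
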